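/- arXiv:2604.20024 — 10 statements merged into one kernel-verified Lean document; each statement's English description precedes it below -/
import Mathlib

section
/- Let d ≥ 1, let V be a real symmetric positive definite d×d matrix, let β > 0, and let δ, ρ satisfy 0 < 2δ < ρ < 1. Set α = 2β√d/(ρ − 2δ). Let θ̂, θ* ∈ ℝ^d satisfy ‖θ̂ − θ*‖_V ≤ β, let u ∈ ℝ^d, and define θ̃ = V^{-1/2} Q_{α,u}(V^{1/2} θ̂). Then ‖θ̃ − θ*‖_V ≤ β·(1 + d/(ρ − 2δ)). -/
open Matrix Finset

/-- Randomized grid rounding map: coordinatewise,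
`(Q_{α,u}(z))_j = α·⌊(z_j − u_j)/α⌋ + u_j + α/2`. -/
noncomputable def gridRound {d : ℕ} (α : ℝ) (u z : Fin d → ℝ) : Fin d → ℝ :=
  fun j => α * (⌊(z j - u j) / α⌋ : ℤ) + u j + α / 2

/-- The positive semidefinite square root, as defined in the older Mathlib
(removed since). -/
noncomputable def Matrix.PosSemidef.sqrt {n : Type*} [Fintype n] [DecidableEq n]
    {A : Matrix n n ℝ} (hA : A.PosSemidef) : Matrix n n ℝ :=
  hA.1.eigenvectorUnitary.1 * diagonal ((√·) ∘ hA.1.eigenvalues) *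
    (star hA.1.eigenvectorUnitary : Matrix n n ℝ)

lemma Matrix.PosSemidef.sqrt_isHermitian' {n : Type*} [Fintype n] [DecidableEq n]
    {A : Matrix n n ℝ} (hA : A.PosSemidef) : hA.sqrt.IsHermitian := by
  unfold Matrix.PosSemidef.sqrt
  rw [IsHermitian, conjTranspose_mul, conjTranspose_mul,
    Matrix.star_eq_conjTranspose, conjTranspose_conjTranspose, diagonal_conjTranspose,
    Matrix.mul_assoc, star_trivial]

lemma Matrix.PosSemidef.sqrt_mul_self' {n : Type*} [Fintype n] [DecidableEq n]
    {A : Matrix n n ℝ} (hA : A.PosSemidef) : hA.sqrt * hA.sqrt = A := by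
  unfold Matrix.PosSemidef.sqrt
  have hU : (star hA.1.eigenvectorUnitary : Matrix n n ℝ) * hA.1.eigenvectorUnitary.1 = 1 :=
    Unitary.coe_star_mul_self _
  have hD : diagonal ((√·) ∘ hA.1.eigenvalues) * diagonal ((√·) ∘ hA.1.eigenvalues)
      = diagonal (RCLike.ofReal ∘ hA.1.eigenvalues) := by
    rw [diagonal_mul_diagonal]
    congr 1; funext i
    simp [Real.mul_self_sqrt (hA.eigenvalues_nonneg i)]
  conv_rhs => rw [hA.1.spectral_theorem]
  rw [Unitary.conjStarAlgAut_apply]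
  calc _ = hA.1.eigenvectorUnitary.1 * (diagonal ((√·) ∘ hA.1.eigenvalues) *
      ((star hA.1.eigenvectorUnitary : Matrix n n ℝ) * hA.1.eigenvectorUnitary.1) *
      diagonal ((√·) ∘ hA.1.eigenvalues)) * (star hA.1.eigenvectorUnitary : Matrix n n ℝ) := by
        simp only [Matrix.mul_assoc]
    _ = _ := by rw [hU, Matrix.mul_one, hD]

noncomputable def enorm {d : ℕ} (x : Fin d → ℝ) : ℝ :=
  ‖(WithLp.equiv 2 (Fin d → ℝ)).symm x‖

lemma enorm_eq {d : ℕ} (x : Fin d → ℝ) : _root_.enorm x = Real.sqrt (x ⬝ᵥ x) := by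
  rw [_root_.enorm, EuclideanSpace.norm_eq]
  congr 1
  simp [dotProduct, sq]

lemma enorm_triangle {d : ℕ} (x y : Fin d → ℝ) :
    _root_.enorm (x + y) ≤ _root_.enorm x + _root_.enorm y := by
  simpa [_root_.enorm] using norm_add_le ((WithLp.equiv 2 (Fin d → ℝ)).symm x)
    ((WithLp.equiv 2 (Fin d → ℝ)).symm y)

lemma gridRound_close {d : ℕ} {α : ℝ} (hα : 0 < α) (u z : Fin d → ℝ) (j : Fin d) :
    |gridRound α u z j - z j| ≤ α / 2 := by
  set t := (z j - u j) / α with ht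
  have hαt : α * t = z j - u j := by rw [ht]; field_simp
  have h1 : gridRound α u z j - z j = α * ((⌊t⌋ : ℝ) - t) + α / 2 := by
    simp only [gridRound, ← ht]
    linear_combination hαt
  have h2 : (0:ℝ) ≤ t - ⌊t⌋ := by linarith [Int.floor_le t]
  have h3 : t - ⌊t⌋ < 1 := by linarith [Int.lt_floor_add_one t]
  rw [h1, abs_le]
  constructor <;> nlinarith

theorem stmt_3 (d : ℕ) (hd : 1 ≤ d) (V : Matrix (Fin d) (Fin d) ℝ)
    (hV : V.PosDef) (β δ ρ : ℝ) (hβ : 0 < β)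
    (hδ : 0 < 2 * δ) (hδρ : 2 * δ < ρ) (hρ : ρ < 1)
    (α : ℝ) (hα : α = 2 * β * Real.sqrt d / (ρ - 2 * δ))
    (θhat θstar : Fin d → ℝ)
    (hconf : Real.sqrt ((θhat - θstar) ⬝ᵥ (V *ᵥ (θhat - θstar))) ≤ β)
    (u θtilde : Fin d → ℝ)
    (hθ : θtilde = (hV.posSemidef.sqrt)⁻¹ *ᵥ
      gridRound α u (hV.posSemidef.sqrt *ᵥ θhat)) :
    Real.sqrt ((θtilde - θstar) ⬝ᵥ (V *ᵥ (θtilde - θstar)))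
      ≤ β * (1 + d / (ρ - 2 * δ)) := by
  have hρδ : 0 < ρ - 2 * δ := by linarith
  set S := hV.posSemidef.sqrt with hS
  have hSherm : S.IsHermitian := hV.posSemidef.sqrt_isHermitian'
  have hSS : S * S = V := hV.posSemidef.sqrt_mul_self'
  -- S is invertible
  have hdetV : V.det ≠ 0 := hV.det_pos.ne'
  have hdetS : IsUnit S.det := by
    have : S.det * S.det = V.det := by rw [← det_mul, hSS]
    exact isUnit_iff_ne_zero.mpr (fun h => hdetV (by rw [← this, h, zero_mul]))
  -- key identity: x ⬝ᵥ V x = (S x) ⬝ᵥ (S x)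
  have key : ∀ x : Fin d → ℝ, x ⬝ᵥ (V *ᵥ x) = (S *ᵥ x) ⬝ᵥ (S *ᵥ x) := by
    intro x
    have hSt : Sᵀ = S := by
      simpa [conjTranspose_eq_transpose_of_trivial] using hSherm.eq
    rw [← hSS, ← mulVec_mulVec, dotProduct_mulVec, ← hSt, vecMul_transpose, hSt]
  set q := gridRound α u (S *ᵥ θhat) with hq
  have hSθt : S *ᵥ θtilde = q := by
    rw [hθ, mulVec_mulVec, Matrix.mul_nonsing_inv _ hdetS, one_mulVec]
  -- α positivity
  have hsd : (0:ℝ) < Real.sqrt d :=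
    Real.sqrt_pos.mpr (by exact_mod_cast Nat.pos_of_ne_zero (by omega))
  have hαpos : 0 < α := by rw [hα]; positivity
  -- bound enorm (q - S θhat)
  have hbound : _root_.enorm (q - S *ᵥ θhat) ≤ Real.sqrt d * (α / 2) := by
    rw [enorm_eq]
    have h1 : (q - S *ᵥ θhat) ⬝ᵥ (q - S *ᵥ θhat) ≤ d * (α / 2) ^ 2 := by
      have : ∀ j, (q j - (S *ᵥ θhat) j) ^ 2 ≤ (α / 2) ^ 2 := by
        intro j
        have := gridRound_close hαpos u (S *ᵥ θhat) j
        nlinarith [abs_nonneg (q j - (S *ᵥ θhat) j), sq_abs (q j - (S *ᵥ θhat) j)]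
      calc (q - S *ᵥ θhat) ⬝ᵥ (q - S *ᵥ θhat)
          = ∑ j, (q j - (S *ᵥ θhat) j) ^ 2 := by simp [dotProduct, sq]
        _ ≤ ∑ _j : Fin d, (α / 2) ^ 2 := Finset.sum_le_sum (fun j _ => this j)
        _ = d * (α / 2) ^ 2 := by simp [mul_comm]
    calc Real.sqrt ((q - S *ᵥ θhat) ⬝ᵥ (q - S *ᵥ θhat))
        ≤ Real.sqrt (d * (α / 2) ^ 2) := Real.sqrt_le_sqrt h1
      _ = Real.sqrt d * (α / 2) := by
          rw [Real.sqrt_mul (by positivity), Real.sqrt_sq (by positivity)]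
  -- main estimate
  have hmain : Real.sqrt ((θtilde - θstar) ⬝ᵥ (V *ᵥ (θtilde - θstar)))
      ≤ Real.sqrt d * (α / 2) + β := by
    rw [key, ← enorm_eq]
    have hdecomp : S *ᵥ (θtilde - θstar)
        = (q - S *ᵥ θhat) + (S *ᵥ (θhat - θstar)) := by
      rw [mulVec_sub, hSθt, mulVec_sub]; abel
    rw [hdecomp]
    have h2 : _root_.enorm (S *ᵥ (θhat - θstar)) ≤ β := by
      rw [enorm_eq, ← key]; exact hconf
    linarith [enorm_triangle (q - S *ᵥ θhat) (S *ᵥ (θhat - θstar))]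
  have hαd : Real.sqrt d * (α / 2) = β * (d / (ρ - 2 * δ)) := by
    rw [hα]
    have : Real.sqrt d * Real.sqrt d = d := Real.mul_self_sqrt (by positivity)
    field_simp
    linear_combination this
  calc Real.sqrt ((θtilde - θstar) ⬝ᵥ (V *ᵥ (θtilde - θstar)))
      ≤ Real.sqrt d * (α / 2) + β := hmain
    _ = β * (1 + d / (ρ - 2 * δ)) := by rw [hαd]; ring
end

section
/- Let α > 0 and x, y ∈ ℝ. If u is drawn uniformly from the interval [0, α), then the probability that x and y are rounded to different grid cells, i.e. that ⌊(x − u)/α⌋ ≠ ⌊(y − u)/α⌋, is at most |x − y|/α. Equivalently, the Lebesgue measure of the set {u ∈ [0, α) : ⌊(x − u)/α⌋ ≠ ⌊(y − u)/α⌋} is at most |x − y|. -/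
open MeasureTheory

lemma key_round_lemma (α : ℝ) (hα : 0 < α) (x y : ℝ) (hxy : x ≤ y) :
    volume {u ∈ Set.Ico (0 : ℝ) α | ⌊(x - u) / α⌋ ≠ ⌊(y - u) / α⌋}
      ≤ ENNReal.ofReal (y - x) := by
  have hsub : {u ∈ Set.Ico (0 : ℝ) α | ⌊(x - u) / α⌋ ≠ ⌊(y - u) / α⌋} ⊆
      ⋃ k : ℤ, Set.Ico (0 : ℝ) α ∩ Set.Ioc (x - k * α) (y - k * α) := by
    rintro u ⟨hu, hne⟩
    have hle : ⌊(x - u) / α⌋ ≤ ⌊(y - u) / α⌋ :=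
      Int.floor_le_floor (by gcongr <;> linarith)
    have hlt : ⌊(x - u) / α⌋ < ⌊(y - u) / α⌋ := lt_of_le_of_ne hle hne
    refine Set.mem_iUnion.2 ⟨⌊(y - u) / α⌋, hu, ?_, ?_⟩
    · have h1 : (x - u) / α < (⌊(y - u) / α⌋ : ℝ) := Int.floor_lt.mp hlt
      have := (div_lt_iff₀ hα).mp h1
      linarith
    · have h2 : ((⌊(y - u) / α⌋ : ℝ)) ≤ (y - u) / α := Int.floor_le _
      have := (le_div_iff₀ hα).mp h2
      linarith
  calc volume {u ∈ Set.Ico (0 : ℝ) α | ⌊(x - u) / α⌋ ≠ ⌊(y - u) / α⌋}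
      ≤ volume (⋃ k : ℤ, Set.Ico (0 : ℝ) α ∩ Set.Ioc (x - k * α) (y - k * α)) :=
        measure_mono hsub
    _ ≤ ∑' k : ℤ, volume (Set.Ico (0 : ℝ) α ∩ Set.Ioc (x - k * α) (y - k * α)) :=
        measure_iUnion_le _
    _ = ∑' k : ℤ, volume (Set.Ico ((k : ℝ) * α) (k * α + α) ∩ Set.Ioc x y) := by
        refine tsum_congr fun k => ?_
        have hset : Set.Ico (0 : ℝ) α ∩ Set.Ioc (x - k * α) (y - k * α)
            = (· + (k : ℝ) * α) ⁻¹' (Set.Ico ((k : ℝ) * α) (k * α + α) ∩ Set.Ioc x y) := by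
          ext u
          simp only [Set.mem_inter_iff, Set.mem_Ico, Set.mem_Ioc, Set.mem_preimage]
          constructor
          · rintro ⟨⟨h1, h2⟩, h3, h4⟩; exact ⟨⟨by linarith, by linarith⟩, by linarith, by linarith⟩
          · rintro ⟨⟨h1, h2⟩, h3, h4⟩; exact ⟨⟨by linarith, by linarith⟩, by linarith, by linarith⟩
        rw [hset, measure_preimage_add_right]
    _ = volume (⋃ k : ℤ, Set.Ico ((k : ℝ) * α) (k * α + α) ∩ Set.Ioc x y) := by
        refine (measure_iUnion ?_ ?_).symm
        · intro i j hij
          refine Set.disjoint_left.2 fun u hi hj => hij ?_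
          have h1 := hi.1
          have h2 := hj.1
          simp only [Set.mem_Ico] at h1 h2
          have : (i : ℝ) = j := by
            by_contra hne
            rcases lt_or_gt_of_ne hne with h | h
            · have : (i : ℝ) + 1 ≤ j := by exact_mod_cast Int.add_one_le_iff.mpr (by exact_mod_cast h)
              nlinarith [h1.2, h2.1]
            · have : (j : ℝ) + 1 ≤ i := by exact_mod_cast Int.add_one_le_iff.mpr (by exact_mod_cast h)
              nlinarith [h2.2, h1.1]
          exact_mod_cast this
        · exact fun k => measurableSet_Ico.inter measurableSet_Ioc
    _ ≤ volume (Set.Ioc x y) :=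
        measure_mono (Set.iUnion_subset fun k => Set.inter_subset_right)
    _ = ENNReal.ofReal (y - x) := Real.volume_Ioc

theorem stmt_4 (α : ℝ) (hα : 0 < α) (x y : ℝ) :
    volume {u ∈ Set.Ico (0 : ℝ) α | ⌊(x - u) / α⌋ ≠ ⌊(y - u) / α⌋}
        ≤ ENNReal.ofReal |x - y| ∧
      volume {u ∈ Set.Ico (0 : ℝ) α | ⌊(x - u) / α⌋ ≠ ⌊(y - u) / α⌋}
          / ENNReal.ofReal α
        ≤ ENNReal.ofReal (|x - y| / α) := by
  have h1 : volume {u ∈ Set.Ico (0 : ℝ) α | ⌊(x - u) / α⌋ ≠ ⌊(y - u) / α⌋}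
      ≤ ENNReal.ofReal |x - y| := by
    rcases le_total x y with h | h
    · rw [abs_sub_comm, abs_of_nonneg (sub_nonneg.2 h)]
      exact key_round_lemma α hα x y h
    · rw [abs_of_nonneg (sub_nonneg.2 h)]
      have : {u ∈ Set.Ico (0 : ℝ) α | ⌊(x - u) / α⌋ ≠ ⌊(y - u) / α⌋}
          = {u ∈ Set.Ico (0 : ℝ) α | ⌊(y - u) / α⌋ ≠ ⌊(x - u) / α⌋} := by
        ext u; simp [ne_comm]
      rw [this]
      exact key_round_lemma α hα y x h
  refine ⟨h1, ?_⟩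
  rw [ENNReal.ofReal_div_of_pos hα]
  exact ENNReal.div_le_div_right h1 _
end

section
/- Let d ≥ 1, α > 0, and z¹, z² ∈ ℝ^d. If u is drawn uniformly from the cube [0, α)^d, then the probability that the randomized grid rounding map disagrees on the two points satisfies P(Q_{α,u}(z¹) ≠ Q_{α,u}(z²)) ≤ ‖z¹ − z²‖₁/α ≤ √d·‖z¹ − z²‖₂/α. -/
open MeasureTheory Finset

lemma oneDim {α a b : ℝ} (hα : 0 < α) (hab : a ≤ b) :
    volume {t : ℝ | t ∈ Set.Ico (0:ℝ) α ∧ ⌊(a - t) / α⌋ ≠ ⌊(b - t) / α⌋}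
      ≤ ENNReal.ofReal (b - a) := by
  rcases le_or_gt α (b - a) with hba | hba
  · calc volume {t : ℝ | t ∈ Set.Ico (0:ℝ) α ∧ ⌊(a - t) / α⌋ ≠ ⌊(b - t) / α⌋}
        ≤ volume (Set.Ico (0:ℝ) α) := measure_mono fun t ht => ht.1
      _ = ENNReal.ofReal α := by rw [Real.volume_Ico, sub_zero]
      _ ≤ _ := ENNReal.ofReal_le_ofReal hba
  · set K : ℤ := ⌊b / α⌋ with hK
    have hKb : (K : ℝ) * α ≤ b := by
      have h := Int.floor_le (b / α)
      have := mul_le_mul_of_nonneg_right h hα.le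
      rwa [div_mul_cancel₀ _ hα.ne'] at this
    have haK : ((K : ℝ) - 1) * α < a := by nlinarith
    have cover : {t : ℝ | t ∈ Set.Ico (0:ℝ) α ∧ ⌊(a - t) / α⌋ ≠ ⌊(b - t) / α⌋} ⊆
        Set.Icc (max (a - K * α) 0) (min (b - K * α) α) ∪
        Set.Icc (max (a - (K - 1) * α) 0) (min (b - (K - 1) * α) α) := by
      rintro t ⟨⟨ht0, htα⟩, hne⟩
      have hxy : (a - t) / α ≤ (b - t) / α := by gcongr <;> linarith
      have hfl : ⌊(a - t) / α⌋ < ⌊(b - t) / α⌋ := lt_of_le_of_ne (Int.floor_le_floor hxy) hne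
      set k : ℤ := ⌊(b - t) / α⌋ with hk
      have h1 : (a - t) / α < (k : ℝ) := by
        have h1' : (⌊(a - t) / α⌋ : ℝ) + 1 ≤ (k : ℝ) := by exact_mod_cast hfl
        have := Int.lt_floor_add_one ((a - t) / α)
        linarith
      have h2 : (k : ℝ) ≤ (b - t) / α := Int.floor_le _
      have h1' : a - t < k * α := by
        have := mul_lt_mul_of_pos_right h1 hα
        rwa [div_mul_cancel₀ _ hα.ne'] at this
      have h2' : (k : ℝ) * α ≤ b - t := by
        have := mul_le_mul_of_nonneg_right h2 hα.le
        rwa [div_mul_cancel₀ _ hα.ne'] at this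
      have hkK : k ≤ K := by
        rw [hK]
        apply Int.le_floor.mpr
        rw [le_div_iff₀ hα]
        linarith
      have hkK' : K - 1 ≤ k := by
        have : ((K : ℝ) - 2) * α < (k : ℝ) * α := by nlinarith
        have h3 : ((K : ℝ) - 2) < (k : ℝ) := lt_of_mul_lt_mul_right this hα.le
        have : (K : ℤ) - 2 < k := by exact_mod_cast h3
        omega
      rcases (by omega : k = K - 1 ∨ k = K) with he | he <;>
        rw [he] at h1' h2' <;> push_cast at h1' h2'
      · right
        constructor
        · push_cast; apply max_le (by push_cast at h1' ⊢; linarith) ht0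
        · push_cast; exact le_min (by push_cast at h2' ⊢; linarith) htα.le
      · left
        exact ⟨max_le (by linarith) ht0, le_min (by linarith) htα.le⟩
    calc volume {t : ℝ | t ∈ Set.Ico (0:ℝ) α ∧ ⌊(a - t) / α⌋ ≠ ⌊(b - t) / α⌋}
        ≤ volume (Set.Icc (max (a - K * α) 0) (min (b - K * α) α)) +
          volume (Set.Icc (max (a - (K - 1) * α) 0) (min (b - (K - 1) * α) α)) :=
          le_trans (measure_mono cover) (measure_union_le _ _)
      _ ≤ ENNReal.ofReal (b - a) := by
          rw [Real.volume_Icc, Real.volume_Icc]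
          push_cast
          rcases le_or_gt a ((K : ℝ) * α) with hc | hc
          · have e1 : max (a - K * α) 0 = 0 := max_eq_right (by linarith)
            have e2 : min (b - ((K : ℝ) - 1) * α) α = α := min_eq_right (by nlinarith)
            have e3 : max (a - ((K : ℝ) - 1) * α) 0 = a - ((K : ℝ) - 1) * α :=
              max_eq_left (by nlinarith)
            rw [e1, e2, e3]
            have : ENNReal.ofReal (min (b - ↑K * α) α - 0) ≤ ENNReal.ofReal (b - K * α) :=
              ENNReal.ofReal_le_ofReal (by simp [min_le_left])
            refine le_trans (add_le_add this le_rfl) ?_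
            rw [← ENNReal.ofReal_add (by linarith) (by nlinarith)]
            apply ENNReal.ofReal_le_ofReal; ring_nf; linarith
          · have e3 : min (b - ((K : ℝ) - 1) * α) α - max (a - ((K : ℝ) - 1) * α) 0 ≤ 0 := by
              have : min (b - ((K : ℝ) - 1) * α) α ≤ α := min_le_right _ _
              have : a - ((K : ℝ) - 1) * α ≤ max (a - ((K : ℝ) - 1) * α) 0 := le_max_left _ _
              nlinarith
            rw [ENNReal.ofReal_of_nonpos e3, add_zero]
            apply ENNReal.ofReal_le_ofReal
            have : a - (K : ℝ) * α ≤ max (a - (K : ℝ) * α) 0 := le_max_left _ _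
            have : min (b - (K : ℝ) * α) α ≤ b - (K : ℝ) * α := min_le_left _ _
            linarith

lemma oneDim' {α a b : ℝ} (hα : 0 < α) :
    volume {t : ℝ | t ∈ Set.Ico (0:ℝ) α ∧ ⌊(a - t) / α⌋ ≠ ⌊(b - t) / α⌋}
      ≤ ENNReal.ofReal |a - b| := by
  rcases le_total a b with h | h
  · rw [abs_of_nonpos (by linarith), neg_sub]
    exact oneDim hα h
  · have : {t : ℝ | t ∈ Set.Ico (0:ℝ) α ∧ ⌊(a - t) / α⌋ ≠ ⌊(b - t) / α⌋}
        = {t : ℝ | t ∈ Set.Ico (0:ℝ) α ∧ ⌊(b - t) / α⌋ ≠ ⌊(a - t) / α⌋} := by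
      ext t; simp [ne_comm]
    rw [this, abs_of_nonneg (by linarith)]
    exact oneDim hα h

theorem stmt_5 (d : ℕ) (hd : 1 ≤ d) (α : ℝ) (hα : 0 < α)
    (z₁ z₂ : Fin d → ℝ) :
    volume {u ∈ Set.univ.pi fun _ : Fin d => Set.Ico (0 : ℝ) α |
          gridRound α u z₁ ≠ gridRound α u z₂}
        / volume (Set.univ.pi fun _ : Fin d => Set.Ico (0 : ℝ) α)
      ≤ ENNReal.ofReal ((∑ j : Fin d, |z₁ j - z₂ j|) / α) ∧
    (∑ j : Fin d, |z₁ j - z₂ j|) / α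
      ≤ Real.sqrt d * Real.sqrt (∑ j : Fin d, (z₁ j - z₂ j) ^ 2) / α := by
  constructor
  · set c := ENNReal.ofReal α with hc
    have hc0 : c ≠ 0 := by simp [hc, hα.ne']; positivity
    have hct : c ≠ ⊤ := ENNReal.ofReal_ne_top
    have hcube : volume (Set.univ.pi fun _ : Fin d => Set.Ico (0 : ℝ) α) = c ^ d := by
      rw [volume_pi_pi]
      simp [Real.volume_Ico, hc]
    have hsub : {u ∈ Set.univ.pi fun _ : Fin d => Set.Ico (0 : ℝ) α |
          gridRound α u z₁ ≠ gridRound α u z₂} ⊆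
        ⋃ j : Fin d, Set.univ.pi (fun i => if i = j then
          {t : ℝ | t ∈ Set.Ico (0:ℝ) α ∧ ⌊(z₁ j - t) / α⌋ ≠ ⌊(z₂ j - t) / α⌋}
          else Set.Ico (0:ℝ) α) := by
      rintro u ⟨hu, hne⟩
      obtain ⟨j, hj⟩ := Function.ne_iff.mp hne
      refine Set.mem_iUnion.mpr ⟨j, fun i _ => ?_⟩
      by_cases hij : i = j
      · subst hij
        simp only [if_pos rfl]
        refine ⟨hu i (Set.mem_univ i), fun hfl => hj ?_⟩
        simp [gridRound, hfl]
      · simp only [if_neg hij]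
        exact hu i (Set.mem_univ i)
    have hpi : ∀ j : Fin d, volume (Set.univ.pi (fun i => if i = j then
          {t : ℝ | t ∈ Set.Ico (0:ℝ) α ∧ ⌊(z₁ j - t) / α⌋ ≠ ⌊(z₂ j - t) / α⌋}
          else Set.Ico (0:ℝ) α)) ≤ ENNReal.ofReal |z₁ j - z₂ j| * c ^ (d - 1) := by
      intro j
      rw [volume_pi_pi]
      rw [← Finset.mul_prod_erase univ _ (mem_univ j)]
      have h1 : ∏ i ∈ univ.erase j, volume (if i = j then
          {t : ℝ | t ∈ Set.Ico (0:ℝ) α ∧ ⌊(z₁ j - t) / α⌋ ≠ ⌊(z₂ j - t) / α⌋}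
          else Set.Ico (0:ℝ) α) = c ^ (d - 1) := by
        have heq : ∀ i ∈ univ.erase j, volume (if i = j then
            {t : ℝ | t ∈ Set.Ico (0:ℝ) α ∧ ⌊(z₁ j - t) / α⌋ ≠ ⌊(z₂ j - t) / α⌋}
            else Set.Ico (0:ℝ) α) = c := by
          intro i hi
          rw [if_neg (Finset.ne_of_mem_erase hi), Real.volume_Ico, sub_zero]
        rw [Finset.prod_congr rfl heq, Finset.prod_const,
          Finset.card_erase_of_mem (mem_univ j)]
        simp
      rw [h1, if_pos rfl]
      exact mul_le_mul_left (oneDim' hα) _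
    have hS : volume {u ∈ Set.univ.pi fun _ : Fin d => Set.Ico (0 : ℝ) α |
          gridRound α u z₁ ≠ gridRound α u z₂}
        ≤ ENNReal.ofReal (∑ j : Fin d, |z₁ j - z₂ j|) * c ^ (d - 1) := by
      refine le_trans (measure_mono hsub) (le_trans (measure_iUnion_le _) ?_)
      rw [tsum_fintype]
      calc ∑ j : Fin d, volume _ ≤ ∑ j : Fin d, ENNReal.ofReal |z₁ j - z₂ j| * c ^ (d - 1) :=
            Finset.sum_le_sum fun j _ => hpi j
        _ = ENNReal.ofReal (∑ j : Fin d, |z₁ j - z₂ j|) * c ^ (d - 1) := by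
            rw [← Finset.sum_mul, ← ENNReal.ofReal_sum_of_nonneg (fun j _ => abs_nonneg _)]
    rw [hcube]
    rw [ENNReal.div_le_iff (pow_ne_zero d hc0) (ENNReal.pow_ne_top hct)]
    have hrw : ENNReal.ofReal ((∑ j : Fin d, |z₁ j - z₂ j|) / α) * c ^ d
        = ENNReal.ofReal (∑ j : Fin d, |z₁ j - z₂ j|) * c ^ (d - 1) := by
      have hd1 : c ^ d = c ^ (d - 1) * c := by
        rw [← pow_succ]; congr 1; omega
      rw [hd1]
      rw [← mul_assoc, mul_comm (ENNReal.ofReal _) (c ^ (d-1)), mul_assoc, hc,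
        ← ENNReal.ofReal_mul (by positivity), div_mul_cancel₀ _ hα.ne', mul_comm]
    rw [hrw]
    exact hS
  · have hcs : (∑ j : Fin d, |z₁ j - z₂ j|)
        ≤ Real.sqrt d * Real.sqrt (∑ j : Fin d, (z₁ j - z₂ j) ^ 2) := by
      have h2 : (∑ j : Fin d, |z₁ j - z₂ j|) ^ 2
          ≤ (d : ℝ) * ∑ j : Fin d, (z₁ j - z₂ j) ^ 2 := by
        have := Finset.sum_mul_sq_le_sq_mul_sq univ (fun _ : Fin d => (1:ℝ))
          (fun j => |z₁ j - z₂ j|)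
        simpa [sq_abs] using this
      calc (∑ j : Fin d, |z₁ j - z₂ j|)
          = Real.sqrt ((∑ j : Fin d, |z₁ j - z₂ j|) ^ 2) :=
            (Real.sqrt_sq (Finset.sum_nonneg fun j _ => abs_nonneg _)).symm
        _ ≤ Real.sqrt ((d : ℝ) * ∑ j : Fin d, (z₁ j - z₂ j) ^ 2) := Real.sqrt_le_sqrt h2
        _ = Real.sqrt d * Real.sqrt (∑ j : Fin d, (z₁ j - z₂ j) ^ 2) :=
            Real.sqrt_mul (Nat.cast_nonneg d) _
    gcongr
end

section
/- Let d ≥ 1, β > 0, and ε ∈ (0, 1), and set α = 2β√d/ε. Let z¹, z² ∈ ℝ^d satisfy ‖z¹ − z²‖₂ ≤ 2β. If u is drawn uniformly from the cube [0, α)^d, then P(Q_{α,u}(z¹) = Q_{α,u}(z²)) ≥ 1 − ε. -/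
open MeasureTheory Finset

/-- One-dimensional key lemma, ordered version. -/
lemma coord_bad_le (α : ℝ) (hα : 0 < α) (a b : ℝ) (hab : a ≤ b) (h : b - a < α) :
    ∃ S : Set ℝ,
      {t | t ∈ Set.Ico (0:ℝ) α ∧ ⌊(a - t)/α⌋ ≠ ⌊(b - t)/α⌋} ⊆ S ∧
      volume S ≤ ENNReal.ofReal (b - a) := by
  set k₀ : ℤ := ⌊a / α⌋ with hk₀
  set c : ℝ := a - k₀ * α with hc
  set δ : ℝ := b - a with hδ
  have hc0 : 0 ≤ c := by
    have := Int.floor_le (a / α)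
    have : (k₀ : ℝ) * α ≤ a := by
      rw [hk₀]
      calc (⌊a/α⌋ : ℝ) * α ≤ (a/α) * α := by
            exact mul_le_mul_of_nonneg_right (Int.floor_le _) hα.le
        _ = a := by field_simp
    linarith
  have hcα : c < α := by
    have : a / α < k₀ + 1 := Int.lt_floor_add_one _
    have : a < (k₀ + 1) * α := by
      have := (div_lt_iff₀ hα).mp (Int.lt_floor_add_one (a/α))
      push_cast at this ⊢
      linarith
    push_cast at this
    simp only [hc]
    nlinarith
  have hδ0 : 0 ≤ δ := by linarith
  refine ⟨Set.Ioc c (min (c + δ) α) ∪ Set.Icc 0 (c + δ - α), ?_, ?_⟩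
  · rintro t ⟨⟨ht0, htα⟩, hne⟩
    have hmono : ⌊(a - t)/α⌋ ≤ ⌊(b - t)/α⌋ :=
      Int.floor_le_floor ((div_le_div_iff_of_pos_right hα).mpr (by linarith))
    have hlt : ⌊(a - t)/α⌋ < ⌊(b - t)/α⌋ := lt_of_le_of_ne hmono hne
    set k : ℤ := ⌊(a - t)/α⌋ + 1 with hk
    have h1 : (a - t)/α < k := by
      rw [hk]; push_cast; exact Int.lt_floor_add_one _
    have h2 : (k : ℝ) ≤ (b - t)/α := by
      have : k ≤ ⌊(b - t)/α⌋ := hlt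
      exact le_trans (by exact_mod_cast this) (Int.floor_le _)
    have h1' : a - t < k * α := by
      have := (div_lt_iff₀ hα).mp h1; linarith
    have h2' : (k : ℝ) * α ≤ b - t := by
      have := (le_div_iff₀ hα).mp h2; linarith
    -- bound k
    have hklb : k₀ ≤ k := by
      have : (k₀ : ℝ) - 1 < k := by
        have : a - α < (k:ℝ) * α := by linarith
        have hx : ((k₀:ℝ) - 1) * α < (k:ℝ) * α := by nlinarith
        exact (mul_lt_mul_iff_of_pos_right hα).mp hx
      have h' : k₀ - 1 < k := by exact_mod_cast this
      omega
    have hkub : k ≤ k₀ + 1 := by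
      have hx : (k:ℝ) * α < ((k₀:ℝ) + 2) * α := by nlinarith
      have : (k:ℝ) < (k₀:ℝ) + 2 := (mul_lt_mul_iff_of_pos_right hα).mp hx
      have : k < k₀ + 2 := by exact_mod_cast this
      omega
    rcases (by omega : k = k₀ ∨ k = k₀ + 1) with hke | hke <;> rw [hke] at h1' h2'
    · left
      constructor
      · simp only [hc]; linarith
      · refine le_min (by simp only [hc, hδ]; push_cast; linarith) (by linarith)
    · right
      constructor
      · exact ht0
      · simp only [hc, hδ]; push_cast at h2' ⊢; linarith
  · refine le_trans (measure_union_le _ _) ?_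
    rw [Real.volume_Ioc, Real.volume_Icc]
    rcases le_total (c + δ) α with hca | hca
    · rw [min_eq_left hca]
      have : ENNReal.ofReal (c + δ - α - 0) = 0 := by
        rw [ENNReal.ofReal_eq_zero]; linarith
      rw [this, add_zero]
      exact ENNReal.ofReal_le_ofReal (by linarith)
    · rw [min_eq_right hca]
      rw [← ENNReal.ofReal_add (by linarith) (by linarith)]
      exact ENNReal.ofReal_le_ofReal (by linarith)

/-- One-dimensional key lemma, general version. -/
lemma coord_bad (α : ℝ) (hα : 0 < α) (a b : ℝ) (h : |a - b| < α) :
    ∃ S : Set ℝ,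
      {t | t ∈ Set.Ico (0:ℝ) α ∧ ⌊(a - t)/α⌋ ≠ ⌊(b - t)/α⌋} ⊆ S ∧
      volume S ≤ ENNReal.ofReal |a - b| := by
  rcases le_total a b with hab | hab
  · have h' : b - a < α := by
      rwa [abs_sub_comm, abs_of_nonneg (by linarith)] at h
    obtain ⟨S, hsub, hvol⟩ := coord_bad_le α hα a b hab h'
    exact ⟨S, hsub, by rwa [abs_sub_comm, abs_of_nonneg (by linarith)]⟩
  · have h' : a - b < α := by rwa [abs_of_nonneg (by linarith)] at h
    obtain ⟨S, hsub, hvol⟩ := coord_bad_le α hα b a hab h'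
    refine ⟨S, fun t ht => hsub ⟨ht.1, ht.2.symm⟩, ?_⟩
    rwa [abs_of_nonneg (by linarith)]


theorem stmt_6 (d : ℕ) (hd : 1 ≤ d) (β ε : ℝ) (hβ : 0 < β)
    (hε : ε ∈ Set.Ioo (0 : ℝ) 1)
    (α : ℝ) (hα : α = 2 * β * Real.sqrt d / ε)
    (z₁ z₂ : Fin d → ℝ)
    (hz : Real.sqrt (∑ j : Fin d, (z₁ j - z₂ j) ^ 2) ≤ 2 * β) :
    volume {u ∈ Set.univ.pi fun _ : Fin d => Set.Ico (0 : ℝ) α |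
          gridRound α u z₁ = gridRound α u z₂}
        / volume (Set.univ.pi fun _ : Fin d => Set.Ico (0 : ℝ) α)
      ≥ ENNReal.ofReal (1 - ε) := by
  obtain ⟨hε0, hε1⟩ := hε
  have hd1 : (1:ℝ) ≤ Real.sqrt d := by
    rw [show (1:ℝ) = Real.sqrt 1 by simp]
    exact Real.sqrt_le_sqrt (by exact_mod_cast hd)
  have hα0 : 0 < α := by
    rw [hα]; positivity
  have hεα : ε * α = 2 * β * Real.sqrt d := by
    rw [hα]; field_simp
  have hcoordbound : ∀ j, |z₁ j - z₂ j| < α := by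
    intro j
    have h1 : (z₁ j - z₂ j)^2 ≤ ∑ i, (z₁ i - z₂ i)^2 :=
      Finset.single_le_sum (f := fun i => (z₁ i - z₂ i)^2) (fun i _ => sq_nonneg _) (mem_univ j)
    have h2 : |z₁ j - z₂ j| ≤ 2 * β := by
      have := (Real.sqrt_le_sqrt h1).trans hz
      rwa [Real.sqrt_sq_eq_abs] at this
    have h3 : 2 * β < α := by
      rw [hα, lt_div_iff₀ hε0]; nlinarith
    linarith
  have hsum : ∑ j, |z₁ j - z₂ j| ≤ ε * α := by
    have hCS : (∑ j, |z₁ j - z₂ j|)^2 ≤ (d:ℝ) * ∑ j, (z₁ j - z₂ j)^2 := by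
      have := sq_sum_le_card_mul_sum_sq (s := (univ : Finset (Fin d)))
        (f := fun j => |z₁ j - z₂ j|)
      simpa [sq_abs] using this
    have h0 : 0 ≤ ∑ j, |z₁ j - z₂ j| := Finset.sum_nonneg fun _ _ => abs_nonneg _
    calc ∑ j, |z₁ j - z₂ j| = Real.sqrt ((∑ j, |z₁ j - z₂ j|)^2) := (Real.sqrt_sq h0).symm
      _ ≤ Real.sqrt ((d:ℝ) * ∑ j, (z₁ j - z₂ j)^2) := Real.sqrt_le_sqrt hCS
      _ = Real.sqrt d * Real.sqrt (∑ j, (z₁ j - z₂ j)^2) := Real.sqrt_mul (by positivity) _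
      _ ≤ Real.sqrt d * (2*β) := mul_le_mul_of_nonneg_left hz (Real.sqrt_nonneg _)
      _ = ε * α := by rw [hεα]; ring
  choose S hS hvol using fun j => coord_bad α hα0 (z₁ j) (z₂ j) (hcoordbound j)
  set cube := Set.univ.pi fun _ : Fin d => Set.Ico (0 : ℝ) α with hcube
  set G := {u ∈ cube | gridRound α u z₁ = gridRound α u z₂} with hG
  have hVcube : volume cube = ENNReal.ofReal α ^ d := by
    rw [hcube, volume_pi_pi]
    simp [Real.volume_Ico]
  have hcover : cube ⊆ G ∪ ⋃ j, Set.univ.pi fun i => if i = j then S j else Set.Ico (0:ℝ) α := by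
    intro u hu
    by_cases hgu : gridRound α u z₁ = gridRound α u z₂
    · exact Or.inl ⟨hu, hgu⟩
    · right
      obtain ⟨j, hj⟩ := Function.ne_iff.mp hgu
      refine Set.mem_iUnion.mpr ⟨j, fun i _ => ?_⟩
      by_cases hij : i = j
      · subst hij
        simp only [if_pos rfl]
        apply hS i
        refine ⟨hu i (Set.mem_univ i), fun heq => hj ?_⟩
        simp [gridRound, heq]
      · simp only [if_neg hij]
        exact hu i (Set.mem_univ i)
  have hPj : ∀ j, volume (Set.univ.pi fun i => if i = j then S j else Set.Ico (0:ℝ) α)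
      ≤ ENNReal.ofReal |z₁ j - z₂ j| * ENNReal.ofReal α ^ (d-1) := by
    intro j
    rw [volume_pi_pi, ← Finset.mul_prod_erase univ _ (mem_univ j)]
    simp only [if_pos rfl]
    have hrest : ∏ i ∈ univ.erase j, volume (if i = j then S j else Set.Ico (0:ℝ) α)
        = ENNReal.ofReal α ^ (d-1) := by
      rw [Finset.prod_congr rfl (fun i hi => by
        rw [if_neg (Finset.ne_of_mem_erase hi), Real.volume_Ico, sub_zero])]
      rw [Finset.prod_const, Finset.card_erase_of_mem (mem_univ j), Finset.card_univ,
        Fintype.card_fin]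
    rw [hrest]
    exact mul_le_mul_left (hvol j) _
  have hmain : ENNReal.ofReal α ^ d ≤ volume G + ENNReal.ofReal ε * ENNReal.ofReal α ^ d := by
    calc ENNReal.ofReal α ^ d = volume cube := hVcube.symm
      _ ≤ volume (G ∪ ⋃ j, Set.univ.pi fun i => if i = j then S j else Set.Ico (0:ℝ) α) :=
          measure_mono hcover
      _ ≤ volume G + volume (⋃ j, Set.univ.pi fun i => if i = j then S j else Set.Ico (0:ℝ) α) :=
          measure_union_le _ _
      _ ≤ volume G + ∑ j, volume (Set.univ.pi fun i => if i = j then S j else Set.Ico (0:ℝ) α) :=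
          add_le_add_right ((measure_iUnion_le _).trans_eq (tsum_fintype _)) _
      _ ≤ volume G + ∑ j, ENNReal.ofReal |z₁ j - z₂ j| * ENNReal.ofReal α ^ (d-1) :=
          add_le_add_right (Finset.sum_le_sum fun j _ => hPj j) _
      _ = volume G + ENNReal.ofReal (∑ j, |z₁ j - z₂ j|) * ENNReal.ofReal α ^ (d-1) := by
          rw [← Finset.sum_mul, ← ENNReal.ofReal_sum_of_nonneg (fun j _ => abs_nonneg _)]
      _ ≤ volume G + ENNReal.ofReal (ε * α) * ENNReal.ofReal α ^ (d-1) :=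
          add_le_add_right (mul_le_mul_left (ENNReal.ofReal_le_ofReal hsum) _) _
      _ = volume G + ENNReal.ofReal ε * ENNReal.ofReal α ^ d := by
          rw [ENNReal.ofReal_mul hε0.le, mul_assoc, ← pow_succ', Nat.sub_add_cancel hd]
  have hfin : ENNReal.ofReal ε * ENNReal.ofReal α ^ d ≠ ⊤ :=
    ENNReal.mul_ne_top ENNReal.ofReal_ne_top (ENNReal.pow_ne_top ENNReal.ofReal_ne_top)
  have hsplit : ENNReal.ofReal α ^ d
      = ENNReal.ofReal (1-ε) * ENNReal.ofReal α ^ d + ENNReal.ofReal ε * ENNReal.ofReal α ^ d := by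
    rw [← add_mul, ← ENNReal.ofReal_add (by linarith) hε0.le]
    norm_num
  nth_rewrite 1 [hsplit] at hmain
  have hVG : ENNReal.ofReal (1-ε) * ENNReal.ofReal α ^ d ≤ volume G :=
    (ENNReal.add_le_add_iff_right hfin).mp hmain
  have hc0 : volume cube ≠ 0 := by
    rw [hVcube]
    exact pow_ne_zero _ (ENNReal.ofReal_pos.mpr hα0).ne'
  have hctop : volume cube ≠ ⊤ := by
    rw [hVcube]
    exact ENNReal.pow_ne_top ENNReal.ofReal_ne_top
  rw [ge_iff_le, ENNReal.le_div_iff_mul_le (Or.inl hc0) (Or.inl hctop), hVcube]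
  exact hVG
end

section
/- Let M be a real symmetric d×d matrix with M ⪰ I, i.e. M − I is positive semidefinite. Then M is invertible and for every u ∈ ℝ^d, ‖u‖₂² ≤ det(M) · (uᵀ M^{-1} u). -/
open Matrix Finset

theorem stmt_7 (d : ℕ) (M : Matrix (Fin d) (Fin d) ℝ)
    (hsymm : M.IsSymm) (hM : (M - 1).PosSemidef) :
    IsUnit M ∧
      ∀ u : Fin d → ℝ,
        ∑ j : Fin d, (u j) ^ 2 ≤ M.det * (u ⬝ᵥ (M⁻¹ *ᵥ u)) := by
  have hH : M.IsHermitian := hsymm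
  -- M is positive definite
  have hMpd : M.PosDef := by
    refine Matrix.PosDef.of_dotProduct_mulVec_pos hH fun x hx => ?_
    have h1 := hM.dotProduct_mulVec_nonneg x
    have hx2 : 0 < star x ⬝ᵥ ((1 : Matrix (Fin d) (Fin d) ℝ) *ᵥ x) := by
      simp only [one_mulVec]
      have : star x ⬝ᵥ x = ∑ j, x j ^ 2 := by
        simp [dotProduct, sq]
      rw [this]
      have : ∃ j, x j ≠ 0 := by
        by_contra h
        push_neg at h
        exact hx (funext h)
      obtain ⟨j, hj⟩ := this
      exact Finset.sum_pos' (fun i _ => sq_nonneg _) ⟨j, Finset.mem_univ j, by positivity⟩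
    have : star x ⬝ᵥ (M *ᵥ x) = star x ⬝ᵥ ((M - 1) *ᵥ x) + star x ⬝ᵥ ((1 : Matrix (Fin d) (Fin d) ℝ) *ᵥ x) := by
      rw [← dotProduct_add, ← add_mulVec, sub_add_cancel]
    rw [this]
    linarith
  have hUnit : IsUnit M := hMpd.isUnit
  refine ⟨hUnit, fun u => ?_⟩
  -- eigenvalues ≥ 1
  have hev1 : ∀ i, 1 ≤ hH.eigenvalues i := by
    intro i
    set w : Fin d → ℝ := ⇑(hH.eigenvectorBasis i) with hw
    have h1 : (0:ℝ) ≤ star w ⬝ᵥ ((M - 1) *ᵥ w) := hM.dotProduct_mulVec_nonneg w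
    have heq : hH.eigenvalues i = star w ⬝ᵥ (M *ᵥ w) := hH.eigenvalues_eq i
    have hnorm : star w ⬝ᵥ w = 1 := by
      have := hH.eigenvectorBasis.orthonormal.1 i
      rw [EuclideanSpace.norm_eq] at this
      have h2 : ∑ j, (w j) ^ 2 = 1 := by
        have := congrArg (· ^ 2) this
        simpa [Real.sq_sqrt (Finset.sum_nonneg fun j _ => sq_nonneg _), sq_abs] using this
      simpa [dotProduct, sq] using h2
    have hsub : star w ⬝ᵥ ((M - 1) *ᵥ w)
        = star w ⬝ᵥ (M *ᵥ w) - 1 := by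
      rw [sub_mulVec, dotProduct_sub, one_mulVec, hnorm]
    rw [hsub] at h1
    linarith [heq ▸ h1]
  have hevpos : ∀ i, 0 < hH.eigenvalues i := fun i => lt_of_lt_of_le one_pos (hev1 i)
  -- det M = ∏ eigenvalues, and each eigenvalue ≤ det M
  have hdet : M.det = ∏ i, hH.eigenvalues i := by
    simpa using hH.det_eq_prod_eigenvalues
  have hevle : ∀ i, hH.eigenvalues i ≤ M.det := by
    intro i
    rw [hdet]
    have hprod : (1:ℝ) ≤ ∏ j ∈ Finset.univ.erase i, hH.eigenvalues j := by
      calc (1:ℝ) = ∏ _j ∈ Finset.univ.erase i, (1:ℝ) := by simp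
        _ ≤ ∏ j ∈ Finset.univ.erase i, hH.eigenvalues j :=
            Finset.prod_le_prod (fun j _ => zero_le_one) (fun j _ => hev1 j)
    calc hH.eigenvalues i = hH.eigenvalues i * 1 := (mul_one _).symm
      _ ≤ hH.eigenvalues i * ∏ j ∈ Finset.univ.erase i, hH.eigenvalues j :=
          mul_le_mul_of_nonneg_left hprod (hevpos i).le
      _ = ∏ j, hH.eigenvalues j := Finset.mul_prod_erase Finset.univ _ (Finset.mem_univ i)
  -- C := det M • M - M^2 is PosSemidef
  set U : Matrix (Fin d) (Fin d) ℝ := (hH.eigenvectorUnitary : Matrix (Fin d) (Fin d) ℝ)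
  have hspec := hH.spectral_theorem
  rw [Unitary.conjStarAlgAut_apply] at hspec
  have hUU : Uᴴ * U = 1 := hH.eigenvectorUnitary.2.1
  set D : Matrix (Fin d) (Fin d) ℝ := diagonal (RCLike.ofReal ∘ hH.eigenvalues)
  have hC : (M.det • M - M * M).PosSemidef := by
    have hform : M.det • M - M * M = U * (M.det • D - D * D) * Uᴴ := by
      have hM2 : M * M = U * (D * D) * Uᴴ := by
        rw [hspec]
        have : (U * D * (star U)) * (U * D * (star U)) = U * (D * (star U * U) * D) * (star U) := by
          noncomm_ring
        rw [this]
        have hst : star U * U = 1 := hUU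
        rw [hst, mul_one]
        rfl
      have hMd : M.det • M = U * (M.det • D) * Uᴴ := by
        rw [hspec]
        simp [Matrix.mul_smul, Matrix.smul_mul]
        rfl
      rw [hMd, hM2, ← Matrix.sub_mul, ← Matrix.mul_sub]
    rw [hform]
    apply Matrix.PosSemidef.mul_mul_conjTranspose_same
    have : M.det • D - D * D = diagonal (fun i => M.det * hH.eigenvalues i - hH.eigenvalues i ^ 2) := by
      simp [D, diagonal_mul_diagonal, Matrix.smul_eq_diagonal_mul, diagonal_mul_diagonal,
        ← Matrix.diagonal_sub]
      intro i
      ring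
    rw [this]
    refine Matrix.posSemidef_diagonal_iff.mpr fun i => ?_
    have := hevle i
    have := hevpos i
    nlinarith
  -- substitute u = M v
  set v : Fin d → ℝ := M⁻¹ *ᵥ u with hv
  have huMv : M *ᵥ v = u := by
    rw [hv, Matrix.mulVec_mulVec, Matrix.mul_nonsing_inv _ (isUnit_iff_isUnit_det _ |>.mp hUnit),
      one_mulVec]
  have key := hC.dotProduct_mulVec_nonneg v
  simp only [RCLike.re_to_real, star_trivial] at key
  rw [sub_mulVec, dotProduct_sub, sub_nonneg, smul_mulVec, dotProduct_smul] at key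
  have h1 : v ⬝ᵥ ((M * M) *ᵥ v) = ∑ j, u j ^ 2 := by
    rw [← Matrix.mulVec_mulVec, huMv]
    have : v ⬝ᵥ (M *ᵥ u) = (M *ᵥ v) ⬝ᵥ u := by
      rw [Matrix.dotProduct_mulVec, ← Matrix.mulVec_transpose, hsymm.eq]
    rw [this, huMv]
    simp [dotProduct, sq]
  have h2 : v ⬝ᵥ (M *ᵥ v) = u ⬝ᵥ (M⁻¹ *ᵥ u) := by
    rw [huMv, ← hv, dotProduct_comm]
  rw [h1, h2] at key
  simpa [smul_eq_mul] using key
end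

section
/- Let A and B be real symmetric positive definite d×d matrices with A ⪰ B, i.e. A − B is positive semidefinite. Then for every x ∈ ℝ^d, xᵀ B^{-1} x ≤ (det(A)/det(B)) · (xᵀ A^{-1} x). -/
open Matrix Finset

-- x ⬝ᵥ M y manipulation helper over ℝ
private lemma mulVec_dot {n : Type*} [Fintype n] (C : Matrix n n ℝ) (x w : n → ℝ) :
    (C *ᵥ x) ⬝ᵥ w = x ⬝ᵥ (Cᵀ *ᵥ w) := by
  rw [dotProduct_comm, dotProduct_mulVec, ← mulVec_transpose, dotProduct_comm]

lemma key_aux {n : Type*} [Fintype n] [DecidableEq n] {M : Matrix n n ℝ}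
    (hM : M.PosDef) (h1 : (1 - M⁻¹).PosSemidef) (y : n → ℝ) :
    y ⬝ᵥ (M *ᵥ y) ≤ M.det * (y ⬝ᵥ y) := by
  have hH := hM.1
  set μ := hH.eigenvalues with hμ
  have hpos : ∀ i, 0 < μ i := hM.eigenvalues_pos
  have hone : ∀ i, 1 ≤ μ i := by
    intro i
    set v : n → ℝ := ⇑(hH.eigenvectorBasis i) with hv
    have hMv : M *ᵥ v = μ i • v := hH.mulVec_eigenvectorBasis i
    have hvv : v ⬝ᵥ v = 1 := by
      have hnorm := hH.eigenvectorBasis.orthonormal.1 i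
      have h2 : (star v) ⬝ᵥ v = (1 : ℝ) := by
        rw [dotProduct_comm, hv, ← EuclideanSpace.inner_eq_star_dotProduct, real_inner_self_eq_norm_sq, hnorm]
        norm_num
      simpa using h2
    have hinv : M⁻¹ *ᵥ v = (μ i)⁻¹ • v := by
      have h3 : M⁻¹ *ᵥ (M *ᵥ v) = v := by
        rw [mulVec_mulVec, nonsing_inv_mul M hM.det_pos.ne'.isUnit, one_mulVec]
      rw [hMv, mulVec_smul] at h3
      have := congrArg (fun w => (μ i)⁻¹ • w) h3
      simpa [smul_smul, inv_mul_cancel₀ (hpos i).ne'] using this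
    have h0 := h1.dotProduct_mulVec_nonneg v
    simp only [sub_mulVec, one_mulVec, hinv, dotProduct_sub, dotProduct_smul, hvv,
      star_trivial, smul_eq_mul, mul_one] at h0
    have h4 : (μ i)⁻¹ ≤ 1 := by linarith
    rcases inv_le_one_iff₀.mp h4 with h | h
    · exact absurd h (not_le.mpr (hpos i))
    · exact h
  set U : Matrix n n ℝ := (hH.eigenvectorUnitary : Matrix n n ℝ) with hU
  have hstar : (star U)ᵀ = U := by
    ext i j
    simp [Matrix.star_apply]
  have hUU : U * star U = 1 := (Matrix.mem_unitaryGroup_iff).mp (Matrix.IsHermitian.eigenvectorUnitary hH).2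
  set z : n → ℝ := star U *ᵥ y with hz
  have hyy : y ⬝ᵥ y = z ⬝ᵥ z := by
    rw [hz, mulVec_dot, mulVec_mulVec, hstar, hUU, one_mulVec]
  have hvm : vecMul y U = z := by
    have hT : Uᵀ = star U := by
      ext i j
      simp [Matrix.star_apply]
    rw [hz, ← mulVec_transpose, hT]
  have hq : y ⬝ᵥ (M *ᵥ y) = ∑ i, z i * (μ i * z i) := by
    conv_lhs => rw [hH.spectral_theorem, Unitary.conjStarAlgAut_apply, ← mulVec_mulVec, ← mulVec_mulVec,
      dotProduct_mulVec, hvm]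
    simp [dotProduct, mulVec_diagonal]
    rfl
  have hdet : M.det = ∏ i, μ i := by
    simpa using hH.det_eq_prod_eigenvalues
  rw [hq, hyy, hdet, dotProduct, Finset.mul_sum]
  apply Finset.sum_le_sum
  intro i _
  have hprod1 : (1:ℝ) ≤ ∏ j ∈ Finset.univ.erase i, μ j := by
    calc (1:ℝ) = ∏ _j ∈ Finset.univ.erase i, (1:ℝ) := by simp
    _ ≤ ∏ j ∈ Finset.univ.erase i, μ j :=
      Finset.prod_le_prod (by simp) (fun j _ => hone j)
  have h5 : μ i ≤ ∏ j, μ j := by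
    rw [← Finset.mul_prod_erase Finset.univ μ (mem_univ i)]
    exact le_mul_of_one_le_right (le_of_lt (hpos i)) hprod1
  nlinarith [mul_self_nonneg (z i)]

theorem stmt_8 (d : ℕ) (A B : Matrix (Fin d) (Fin d) ℝ)
    (hA : A.PosDef) (hB : B.PosDef) (hAB : (A - B).PosSemidef) :
    ∀ x : Fin d → ℝ,
      x ⬝ᵥ (B⁻¹ *ᵥ x) ≤ (A.det / B.det) * (x ⬝ᵥ (A⁻¹ *ᵥ x)) := by
  intro x
  classical
  obtain ⟨S, hSH', hSS⟩ : ∃ S : Matrix (Fin d) (Fin d) ℝ, Sᴴ = S ∧ S * S = A :=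
    (open MatrixOrder in ⟨CFC.sqrt A, (CFC.sqrt_nonneg A).posSemidef.1, CFC.sqrt_mul_sqrt_self A hA.posSemidef.nonneg⟩)
  have hSH : Sᵀ = S := by
    have h2 : Sᴴ = Sᵀ := by
      ext i j; simp [Matrix.conjTranspose_apply]
    rw [← h2, hSH']
  have hdetS : S.det * S.det = A.det := by rw [← det_mul, hSS]
  have hdS : IsUnit S.det := by
    refine isUnit_iff_ne_zero.mpr fun h => ?_
    rw [h, mul_zero] at hdetS
    exact hA.det_pos.ne' hdetS.symm
  have hdB : IsUnit B.det := hB.det_pos.ne'.isUnit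
  have hSi : S⁻¹ * S = 1 := nonsing_inv_mul S hdS
  have hSi' : S * S⁻¹ = 1 := mul_nonsing_inv S hdS
  have hAinv : A⁻¹ = S⁻¹ * S⁻¹ := by rw [← hSS, Matrix.mul_inv_rev]
  have hSiT : (S⁻¹)ᵀ = S⁻¹ := by rw [transpose_nonsing_inv, hSH]
  set M : Matrix (Fin d) (Fin d) ℝ := S * B⁻¹ * S with hM
  have hSone : S⁻¹ * A * S⁻¹ = 1 := by
    rw [← hSS, ← mul_assoc, mul_assoc (S⁻¹ * S), hSi, one_mul, hSi']
  have hMpd : M.PosDef := by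
    rw [posDef_iff_dotProduct_mulVec]
    constructor
    · have hBi : (B⁻¹).IsHermitian := (hB.inv).1
      have := Matrix.isHermitian_conjTranspose_mul_mul S hBi
      rwa [hSH'] at this
    · intro v hv
      have hSv : S *ᵥ v ≠ 0 := by
        intro h0
        apply hv
        have : S⁻¹ *ᵥ (S *ᵥ v) = v := by
          rw [mulVec_mulVec, hSi, one_mulVec]
        rw [h0, mulVec_zero] at this
        exact this.symm
      have hpos := hB.inv.dotProduct_mulVec_pos hSv
      have hrw : star v ⬝ᵥ (M *ᵥ v) = star (S *ᵥ v) ⬝ᵥ (B⁻¹ *ᵥ (S *ᵥ v)) := by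
        simp only [star_trivial]
        rw [hM, ← mulVec_mulVec, ← mulVec_mulVec]
        have := mulVec_dot S v (B⁻¹ *ᵥ (S *ᵥ v))
        rw [hSH] at this
        rw [← this]
      rw [hrw]
      exact hpos
  have hMinv : M⁻¹ = S⁻¹ * B * S⁻¹ := by
    rw [hM, Matrix.mul_inv_rev, Matrix.mul_inv_rev,
      nonsing_inv_nonsing_inv B hdB, mul_assoc]
  have h1MI : (1 - M⁻¹).PosSemidef := by
    have heq : 1 - M⁻¹ = S⁻¹ * (A - B) * S⁻¹ := by
      rw [hMinv, ← hSone]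
      noncomm_ring
    rw [heq]
    have := hAB.mul_mul_conjTranspose_same S⁻¹
    have hSiH : (S⁻¹)ᴴ = S⁻¹ := by
      have : (S⁻¹)ᴴ = (S⁻¹)ᵀ := by ext i j; simp [Matrix.conjTranspose_apply]
      rw [this, hSiT]
    rwa [hSiH] at this
  have key := key_aux hMpd h1MI (S⁻¹ *ᵥ x)
  have hL : (S⁻¹ *ᵥ x) ⬝ᵥ (M *ᵥ (S⁻¹ *ᵥ x)) = x ⬝ᵥ (B⁻¹ *ᵥ x) := by
    rw [mulVec_dot, hSiT, mulVec_mulVec, mulVec_mulVec, hM]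
    rw [show S⁻¹ * (S * B⁻¹ * S) * S⁻¹ = (S⁻¹ * S) * B⁻¹ * (S * S⁻¹) by noncomm_ring,
      hSi, hSi', one_mul, mul_one]
  have hR : (S⁻¹ *ᵥ x) ⬝ᵥ (S⁻¹ *ᵥ x) = x ⬝ᵥ (A⁻¹ *ᵥ x) := by
    rw [mulVec_dot, hSiT, mulVec_mulVec, ← hAinv]
  have hdetM : M.det = A.det / B.det := by
    rw [hM, det_mul, det_mul, det_nonsing_inv]
    rw [mul_comm S.det, mul_assoc, hdetS]
    rw [Ring.inverse_eq_inv']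
    ring
  rw [hL, hR, hdetM] at key
  exact key
end

section
/- Let q ≥ 1 and let A, B be real symmetric positive definite d×d matrices with A ⪰ B and det(A) ≤ q·det(B). Then for every x ∈ ℝ^d, √(xᵀ B^{-1} x) ≤ √q · √(xᵀ A^{-1} x). -/
open Matrix
open scoped MatrixOrder

namespace Stmt9Aux

variable {d : ℕ}

lemma dp_left (M : Matrix (Fin d) (Fin d) ℝ) (a b : Fin d → ℝ) :
    (M *ᵥ a) ⬝ᵥ b = a ⬝ᵥ (Mᵀ *ᵥ b) := by
  rw [dotProduct_mulVec, vecMul_transpose]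

lemma psd_nonneg {M : Matrix (Fin d) (Fin d) ℝ} (hM : M.PosSemidef) (x : Fin d → ℝ) :
    0 ≤ x ⬝ᵥ (M *ᵥ x) := by
  simpa using hM.dotProduct_mulVec_nonneg x

lemma dp_cs (f g : Fin d → ℝ) : (f ⬝ᵥ g) ^ 2 ≤ (f ⬝ᵥ f) * (g ⬝ᵥ g) := by
  simpa [dotProduct, sq] using Finset.sum_mul_sq_le_sq_mul_sq Finset.univ f g

/-- Loewner monotonicity of the inverse, quadratic-form version. -/
lemma key_mono {A B : Matrix (Fin d) (Fin d) ℝ} (hA : A.PosDef) (hB : B.PosDef)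
    (hAB : (A - B).PosSemidef) (u : Fin d → ℝ) :
    u ⬝ᵥ (A⁻¹ *ᵥ u) ≤ u ⬝ᵥ (B⁻¹ *ᵥ u) := by
  classical
  set R := CFC.sqrt B with hRdef
  have hR : R.PosSemidef := (CFC.sqrt_nonneg B).posSemidef
  have hRR : R * R = B := CFC.sqrt_mul_sqrt_self B hB.posSemidef.nonneg
  have hRsym : Rᵀ = R := by
    have := hR.1
    rwa [IsHermitian, conjTranspose_eq_transpose_of_trivial] at this
  have hdetR : R.det ≠ 0 := by
    intro h
    have : B.det = 0 := by rw [← hRR, det_mul, h, mul_zero]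
    exact hB.det_pos.ne' this
  have hRsyminv : (R⁻¹)ᵀ = R⁻¹ := by rw [transpose_nonsing_inv, hRsym]
  have hRinv : R⁻¹ * R = 1 := nonsing_inv_mul R (isUnit_iff_ne_zero.mpr hdetR)
  set y := A⁻¹ *ᵥ u with hy
  set t := u ⬝ᵥ y with htdef
  have h1 : A *ᵥ y = u := by
    rw [hy, mulVec_mulVec, mul_nonsing_inv A (isUnit_iff_ne_zero.mpr hA.det_pos.ne'),
      one_mulVec]
  have ht_eq : t = y ⬝ᵥ (A *ᵥ y) := by rw [h1, dotProduct_comm]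
  have htB : y ⬝ᵥ (B *ᵥ y) ≤ t := by
    have h0 := psd_nonneg hAB y
    rw [sub_mulVec, dotProduct_sub] at h0
    linarith [ht_eq]
  have htnn : 0 ≤ t := ht_eq ▸ psd_nonneg hA.posSemidef y
  have hts : t = (R⁻¹ *ᵥ u) ⬝ᵥ (R *ᵥ y) := by
    rw [dp_left, hRsyminv, mulVec_mulVec, ← mulVec_mulVec, mulVec_mulVec, hRinv, one_mulVec]
  have h4 : (R⁻¹ *ᵥ u) ⬝ᵥ (R⁻¹ *ᵥ u) = u ⬝ᵥ (B⁻¹ *ᵥ u) := by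
    rw [dp_left, hRsyminv, mulVec_mulVec, ← Matrix.mul_inv_rev, hRR]
  have h5 : (R *ᵥ y) ⬝ᵥ (R *ᵥ y) = y ⬝ᵥ (B *ᵥ y) := by
    rw [dp_left, hRsym, mulVec_mulVec, hRR]
  have hcs := dp_cs (R⁻¹ *ᵥ u) (R *ᵥ y)
  rw [← hts, h4, h5] at hcs
  have hBnn : 0 ≤ u ⬝ᵥ (B⁻¹ *ᵥ u) := psd_nonneg hB.inv.posSemidef u
  nlinarith [hcs, htB, hBnn, htnn]

lemma eig_ge_one {C : Matrix (Fin d) (Fin d) ℝ} (hC : C.IsHermitian)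
    (h1 : (C - 1).PosSemidef) (i : Fin d) : 1 ≤ hC.eigenvalues i := by
  set v : Fin d → ℝ := ⇑(hC.eigenvectorBasis i) with hv
  have hmv : C *ᵥ v = hC.eigenvalues i • v := hC.mulVec_eigenvectorBasis i
  have hnz : v ≠ 0 := by
    intro h
    have := hC.eigenvectorBasis.orthonormal.ne_zero i
    exact this (by ext j; exact congrFun h j)
  have hnn := psd_nonneg h1 v
  rw [sub_mulVec, dotProduct_sub, one_mulVec, hmv, dotProduct_smul] at hnn
  have hvv : 0 < v ⬝ᵥ v := by
    rcases (Finset.sum_nonneg fun j _ => mul_self_nonneg (v j)).eq_or_lt with h | h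
    · exact absurd (dotProduct_self_eq_zero.mp h.symm) hnz
    · exact h
  have : (hC.eigenvalues i - 1) * (v ⬝ᵥ v) = hC.eigenvalues i • (v ⬝ᵥ v) - v ⬝ᵥ v := by
    simp [sub_mul]
  nlinarith [hnn, hvv]

lemma qform_le_det {C : Matrix (Fin d) (Fin d) ℝ} (hC : C.IsHermitian)
    (h1 : (C - 1).PosSemidef) (x : Fin d → ℝ) :
    x ⬝ᵥ (C *ᵥ x) ≤ C.det * (x ⬝ᵥ x) := by
  classical
  set U : Matrix (Fin d) (Fin d) ℝ := (hC.eigenvectorUnitary : Matrix (Fin d) (Fin d) ℝ)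
    with hU
  have hUstar : star U = Uᵀ := conjTranspose_eq_transpose_of_trivial U
  set w : Fin d → ℝ := Uᵀ *ᵥ x with hw
  have hdiag : C = U * diagonal (RCLike.ofReal ∘ hC.eigenvalues) * star U :=
    hC.spectral_theorem
  have hofReal : (RCLike.ofReal ∘ hC.eigenvalues : Fin d → ℝ) = hC.eigenvalues := by
    funext j; simp [RCLike.ofReal]
  have hCx : x ⬝ᵥ (C *ᵥ x) = w ⬝ᵥ (diagonal hC.eigenvalues *ᵥ w) := by
    conv_lhs => rw [hdiag, hUstar, hofReal]
    rw [← mulVec_mulVec, ← mulVec_mulVec, dotProduct_mulVec (v := x), ← mulVec_transpose]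
  have hUU : U * Uᵀ = 1 := by
    rw [← hUstar]
    exact mem_unitaryGroup_iff.mp hC.eigenvectorUnitary.2
  have hxx : x ⬝ᵥ x = w ⬝ᵥ w := by
    rw [hw, dp_left, transpose_transpose, mulVec_mulVec, hUU, one_mulVec]
  have hdet : C.det = ∏ j, hC.eigenvalues j := by
    have := hC.det_eq_prod_eigenvalues
    simpa [RCLike.ofReal] using this
  have hge : ∀ j, 1 ≤ hC.eigenvalues j := eig_ge_one hC h1
  have hprod1 : ∀ s : Finset (Fin d), (1:ℝ) ≤ ∏ j ∈ s, hC.eigenvalues j := by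
    intro s
    refine Finset.prod_induction _ (fun r => (1:ℝ) ≤ r)
      (fun a b ha hb => by nlinarith) le_rfl (fun j _ => hge j)
  have hle : ∀ j, hC.eigenvalues j ≤ C.det := by
    intro j
    rw [hdet, ← Finset.mul_prod_erase _ _ (Finset.mem_univ j)]
    exact le_mul_of_one_le_right (by linarith [hge j]) (hprod1 _)
  rw [hCx, hxx]
  have : w ⬝ᵥ (diagonal hC.eigenvalues *ᵥ w) = ∑ j, hC.eigenvalues j * (w j * w j) := by
    simp [dotProduct, mulVec_diagonal]
    exact Finset.sum_congr rfl fun j _ => by ring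
  rw [this, dotProduct, Finset.mul_sum]
  exact Finset.sum_le_sum fun j _ =>
    mul_le_mul_of_nonneg_right (hle j) (mul_self_nonneg (w j))

end Stmt9Aux

theorem stmt_9 (d : ℕ) (q : ℝ) (hq : 1 ≤ q)
    (A B : Matrix (Fin d) (Fin d) ℝ)
    (hA : A.PosDef) (hB : B.PosDef) (hAB : (A - B).PosSemidef)
    (hdet : A.det ≤ q * B.det) :
    ∀ x : Fin d → ℝ,
      Real.sqrt (x ⬝ᵥ (B⁻¹ *ᵥ x))
        ≤ Real.sqrt q * Real.sqrt (x ⬝ᵥ (A⁻¹ *ᵥ x)) := by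
  classical
  intro x
  set S := CFC.sqrt A with hSdef
  have hS : S.PosSemidef := (CFC.sqrt_nonneg A).posSemidef
  have hSS : S * S = A := CFC.sqrt_mul_sqrt_self A hA.posSemidef.nonneg
  have hSsym : Sᵀ = S := by
    have := hS.1
    rwa [Matrix.IsHermitian, Matrix.conjTranspose_eq_transpose_of_trivial] at this
  have hdetS : S.det ≠ 0 := by
    intro h
    have : A.det = 0 := by rw [← hSS, Matrix.det_mul, h, mul_zero]
    exact hA.det_pos.ne' this
  have hSu : IsUnit S.det := isUnit_iff_ne_zero.mpr hdetS
  have hSinv : S⁻¹ * S = 1 := Matrix.nonsing_inv_mul S hSu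
  have hSinv' : S * S⁻¹ = 1 := Matrix.mul_nonsing_inv S hSu
  have hSsyminv : (S⁻¹)ᵀ = S⁻¹ := by rw [Matrix.transpose_nonsing_inv, hSsym]
  set C := S * B⁻¹ * S with hCdef
  have hCpsd : C.PosSemidef := by
    have := hB.inv.posSemidef.mul_mul_conjTranspose_same S
    rwa [Matrix.conjTranspose_eq_transpose_of_trivial, hSsym] at this
  have hAinv : A⁻¹ = S⁻¹ * S⁻¹ := by rw [← hSS, Matrix.mul_inv_rev]
  have hSAS : S * A⁻¹ * S = 1 := by
    rw [hAinv, ← mul_assoc, mul_assoc (S * S⁻¹), hSinv', hSinv, one_mul]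
  have hC1 : (C - 1).PosSemidef := by
    refine Matrix.PosSemidef.of_dotProduct_mulVec_nonneg (hCpsd.1.sub Matrix.isHermitian_one) fun z => ?_
    have hz : star z = z := by simp
    rw [hz, Matrix.sub_mulVec, dotProduct_sub, Matrix.one_mulVec]
    have e1 : z ⬝ᵥ (C *ᵥ z) = (S *ᵥ z) ⬝ᵥ (B⁻¹ *ᵥ (S *ᵥ z)) := by
      rw [Stmt9Aux.dp_left, hSsym]
      rw [hCdef, ← Matrix.mulVec_mulVec, ← Matrix.mulVec_mulVec]
    have e2 : z ⬝ᵥ z = (S *ᵥ z) ⬝ᵥ (A⁻¹ *ᵥ (S *ᵥ z)) := by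
      rw [Stmt9Aux.dp_left, hSsym, Matrix.mulVec_mulVec, Matrix.mulVec_mulVec]
      rw [show S * A⁻¹ * S = 1 from hSAS, Matrix.one_mulVec]
    rw [e1, e2, sub_nonneg]
    exact Stmt9Aux.key_mono hA hB hAB (S *ᵥ z)
  have hdetC : C.det ≤ q := by
    have hSdet2 : S.det * S.det = A.det := by rw [← Matrix.det_mul, hSS]
    have : C.det = A.det * (B.det)⁻¹ := by
      rw [hCdef, Matrix.det_mul, Matrix.det_mul, Matrix.det_nonsing_inv,
        Ring.inverse_eq_inv, ← hSdet2]
      ring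
    rw [this]
    rw [mul_inv_le_iff₀ hB.det_pos]
    linarith
  set y := S⁻¹ *ᵥ x with hy
  have hM : S⁻¹ * (S * B⁻¹ * S) * S⁻¹ = B⁻¹ := by
    simp only [← Matrix.mul_assoc]
    rw [hSinv, Matrix.one_mul, Matrix.mul_assoc, hSinv', Matrix.mul_one]
  have ey : y ⬝ᵥ (C *ᵥ y) = x ⬝ᵥ (B⁻¹ *ᵥ x) := by
    rw [hy, Stmt9Aux.dp_left, hSsyminv, hCdef, Matrix.mulVec_mulVec,
      Matrix.mulVec_mulVec, hM]
  have eyy : y ⬝ᵥ y = x ⬝ᵥ (A⁻¹ *ᵥ x) := by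
    rw [hy, Stmt9Aux.dp_left, hSsyminv, Matrix.mulVec_mulVec, ← hAinv]
  have key : x ⬝ᵥ (B⁻¹ *ᵥ x) ≤ q * (x ⬝ᵥ (A⁻¹ *ᵥ x)) := by
    have h1 := Stmt9Aux.qform_le_det hCpsd.1 hC1 y
    rw [ey, eyy] at h1
    have h2 : 0 ≤ x ⬝ᵥ (A⁻¹ *ᵥ x) := Stmt9Aux.psd_nonneg hA.inv.posSemidef x
    calc x ⬝ᵥ (B⁻¹ *ᵥ x) ≤ C.det * (x ⬝ᵥ (A⁻¹ *ᵥ x)) := h1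
      _ ≤ q * (x ⬝ᵥ (A⁻¹ *ᵥ x)) := mul_le_mul_of_nonneg_right hdetC h2
  calc Real.sqrt (x ⬝ᵥ (B⁻¹ *ᵥ x)) ≤ Real.sqrt (q * (x ⬝ᵥ (A⁻¹ *ᵥ x))) :=
        Real.sqrt_le_sqrt key
    _ = Real.sqrt q * Real.sqrt (x ⬝ᵥ (A⁻¹ *ᵥ x)) :=
        Real.sqrt_mul (by linarith) _
end

section
/- Let d ≥ 1, λ > 0, T ≥ 1, and let a_1,…,a_T ∈ ℝ^d. Define V_1 = λ·I and V_{t+1} = V_t + a_t a_tᵀ for t = 1,…,T. Then Σ_{t=1}^{T} min{1, a_tᵀ V_t^{-1} a_t} ≤ 2·log( det(V_{T+1}) / λ^d ). -/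
open Matrix Finset

private lemma log_ineq_aux {u : ℝ} (hu : 0 ≤ u) : min 1 u ≤ 2 * Real.log (1 + u) := by
  rcases le_or_gt 1 u with h | h
  · rw [min_eq_left h]
    have h2 : Real.log 2 ≤ Real.log (1 + u) := Real.log_le_log (by norm_num) (by linarith)
    have h3 := Real.log_two_gt_d9
    linarith
  · rw [min_eq_right h.le]
    have h1 : (0 : ℝ) < 1 + u := by linarith
    have key : Real.exp (u / 2) ≤ 1 + u := by
      have h2 : 1 - u / 2 ≤ Real.exp (-(u / 2)) := by
        have := Real.add_one_le_exp (-(u / 2)); linarith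
      have h3 : 0 < Real.exp (u / 2) := Real.exp_pos _
      have h4 : Real.exp (-(u / 2)) * Real.exp (u / 2) = 1 := by
        rw [← Real.exp_add]; simp
      nlinarith [h2, h3, h4, mul_le_mul_of_nonneg_right h2 h3.le]
    have h5 : u / 2 ≤ Real.log (1 + u) := (Real.le_log_iff_exp_le h1).mpr key
    linarith

private lemma telescope_aux (L : ℕ → ℝ) (T : ℕ) :
    ∑ t ∈ Finset.Icc 1 T, (L (t + 1) - L t) = L (T + 1) - L 1 := by
  induction T with
  | zero => simp
  | succ n ih => rw [Finset.sum_Icc_succ_top (by omega), ih]; ring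

theorem stmt_11 (d : ℕ) (hd : 1 ≤ d) (lam : ℝ) (hlam : 0 < lam)
    (T : ℕ) (hT : 1 ≤ T) (a : ℕ → Fin d → ℝ)
    (V : ℕ → Matrix (Fin d) (Fin d) ℝ)
    (hV1 : V 1 = lam • (1 : Matrix (Fin d) (Fin d) ℝ))
    (hVrec : ∀ t ∈ Finset.Icc 1 T, V (t + 1) = V t + vecMulVec (a t) (a t)) :
    ∑ t ∈ Finset.Icc 1 T, min 1 (a t ⬝ᵥ ((V t)⁻¹ *ᵥ a t))
      ≤ 2 * Real.log ((V (T + 1)).det / lam ^ d) := by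
  -- positive definiteness of each V t for 1 ≤ t ≤ T+1
  have hpos : ∀ t, 1 ≤ t → t ≤ T + 1 → (V t).PosDef := by
    intro t
    induction t with
    | zero => omega
    | succ n ih =>
      intro ht1 ht2
      rcases Nat.lt_or_ge 1 (n + 1) with h | h
      · have hn1 : 1 ≤ n := by omega
        have hnT : n ≤ T := by omega
        have hVn := ih hn1 (by omega)
        rw [hVrec n (Finset.mem_Icc.mpr ⟨hn1, hnT⟩)]
        refine hVn.add_posSemidef ?_
        rw [vecMulVec_eq Unit]
        have hrow : Matrix.replicateRow Unit (a n) = (Matrix.replicateCol Unit (a n))ᴴ := by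
          rw [conjTranspose_replicateCol]; simp
        rw [hrow]
        exact posSemidef_self_mul_conjTranspose _
      · have hn0 : n = 0 := by omega
        subst hn0
        rw [hV1, smul_one_eq_diagonal]
        exact Matrix.PosDef.diagonal fun _ => hlam
  -- step determinant identity
  have hdet : ∀ t ∈ Finset.Icc 1 T,
      (V (t + 1)).det = (V t).det * (1 + a t ⬝ᵥ ((V t)⁻¹ *ᵥ a t)) := by
    intro t ht
    obtain ⟨ht1, htT⟩ := Finset.mem_Icc.mp ht
    have hVt := hpos t ht1 (by omega)
    have hdet2 : (1 + Matrix.replicateRow Unit (a t) * (V t)⁻¹ * Matrix.replicateCol Unit (a t)).det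
        = 1 + a t ⬝ᵥ ((V t)⁻¹ *ᵥ a t) := by
      rw [det_unique, Matrix.mul_assoc, ← replicateCol_mulVec]
      simp [Matrix.add_apply, Matrix.one_apply_eq]
    rw [hVrec t ht, vecMulVec_eq Unit,
      Matrix.det_add_replicateCol_mul_replicateRow hVt.det_pos.ne'.isUnit, hdet2]
  -- nonnegativity of the quadratic forms
  have hqnn : ∀ t ∈ Finset.Icc 1 T, 0 ≤ a t ⬝ᵥ ((V t)⁻¹ *ᵥ a t) := by
    intro t ht
    obtain ⟨ht1, htT⟩ := Finset.mem_Icc.mp ht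
    have hVt := hpos t ht1 (by omega)
    have := hVt.inv.posSemidef.dotProduct_mulVec_nonneg (a t)
    simpa using this
  -- pointwise bound via logs
  have hstep : ∀ t ∈ Finset.Icc 1 T,
      min 1 (a t ⬝ᵥ ((V t)⁻¹ *ᵥ a t))
        ≤ 2 * (Real.log (V (t + 1)).det - Real.log (V t).det) := by
    intro t ht
    obtain ⟨ht1, htT⟩ := Finset.mem_Icc.mp ht
    have hVt := hpos t ht1 (by omega)
    have hq := hqnn t ht
    have hlog : Real.log (V (t + 1)).det
        = Real.log (V t).det + Real.log (1 + a t ⬝ᵥ ((V t)⁻¹ *ᵥ a t)) := by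
      rw [hdet t ht, Real.log_mul hVt.det_pos.ne' (by linarith)]
    rw [hlog]
    have := log_ineq_aux hq
    linarith
  -- sum everything
  calc ∑ t ∈ Finset.Icc 1 T, min 1 (a t ⬝ᵥ ((V t)⁻¹ *ᵥ a t))
      ≤ ∑ t ∈ Finset.Icc 1 T,
          2 * (Real.log (V (t + 1)).det - Real.log (V t).det) :=
        Finset.sum_le_sum hstep
    _ = 2 * ∑ t ∈ Finset.Icc 1 T,
          (Real.log (V (t + 1)).det - Real.log (V t).det) := by
        rw [Finset.mul_sum]
    _ = 2 * (Real.log (V (T + 1)).det - Real.log (V 1).det) := by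
        rw [telescope_aux (fun t => Real.log (V t).det) T]
    _ = 2 * Real.log ((V (T + 1)).det / lam ^ d) := by
        have hV1det : (V 1).det = lam ^ d := by
          rw [hV1, det_smul, det_one, mul_one, Fintype.card_fin]
        have hVTpos := (hpos (T + 1) (by omega) le_rfl).det_pos
        rw [hV1det, Real.log_div hVTpos.ne' (by positivity)]
end

section
/- Let d ≥ 1, λ > 0, T ≥ 1, and let a_1,…,a_T ∈ ℝ^d. Define V_1 = λ·I and V_{t+1} = V_t + a_t a_tᵀ for t = 1,…,T. Then Σ_{t=1}^{T} min{1, √(a_tᵀ V_t^{-1} a_t)} ≤ √( 2·T·log( det(V_{T+1}) / λ^d ) ). -/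
open Matrix Finset

lemma exp_half_le_two : Real.exp (1/2 : ℝ) ≤ 2 := by
  have h1 : (1 : ℝ) - 1/2 + 1 ≤ Real.exp (-(1/2)) + 1 := by
    have := Real.add_one_le_exp (-(1/2) : ℝ); linarith
  have h2 : Real.exp (1/2 : ℝ) * Real.exp (-(1/2) : ℝ) = 1 := by
    rw [← Real.exp_add]; norm_num
  nlinarith [Real.exp_pos (1/2 : ℝ)]

lemma min_le_two_log {x : ℝ} (hx : 0 ≤ x) : min 1 x ≤ 2 * Real.log (1 + x) := by
  rcases le_total x 1 with h | h
  · rw [min_eq_right h]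
    have h2 : x / 2 ≤ Real.log (1 + x) := by
      rw [Real.le_log_iff_exp_le (by linarith)]
      have h1 : 1 - x/2 ≤ Real.exp (-(x/2)) := by
        have := Real.add_one_le_exp (-(x/2)); linarith
      have h2 : Real.exp (x/2) * Real.exp (-(x/2)) = 1 := by
        rw [← Real.exp_add]; norm_num
      nlinarith [Real.exp_pos (x/2)]
    linarith
  · rw [min_eq_left h]
    have h2 : (1:ℝ)/2 ≤ Real.log (1 + x) := by
      rw [Real.le_log_iff_exp_le (by linarith)]
      calc Real.exp (1/2 : ℝ) ≤ 2 := exp_half_le_two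
        _ ≤ 1 + x := by linarith
    linarith

lemma sq_min_one_sqrt {x : ℝ} (hx : 0 ≤ x) :
    (min 1 (Real.sqrt x)) ^ 2 = min 1 x := by
  rcases le_total 1 (Real.sqrt x) with h | h
  · rw [min_eq_left h, min_eq_left, one_pow]
    nlinarith [Real.sq_sqrt hx]
  · rw [min_eq_right h, Real.sq_sqrt hx, min_eq_right]
    nlinarith [Real.sq_sqrt hx, Real.sqrt_nonneg x]

lemma det_step {d : ℕ} (V : Matrix (Fin d) (Fin d) ℝ) (hV : V.PosDef) (u : Fin d → ℝ) :
    (V + vecMulVec u u).det = V.det * (1 + u ⬝ᵥ (V⁻¹ *ᵥ u)) := by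
  have hdet : IsUnit V.det := isUnit_iff_ne_zero.2 hV.det_pos.ne'
  have h1 : V + vecMulVec u u = V * (1 + V⁻¹ * vecMulVec u u) := by
    rw [mul_add, mul_one, Matrix.mul_nonsing_inv_cancel_left _ _ hdet]
  rw [h1, det_mul]
  congr 1
  rw [vecMulVec_eq (Fin 1), ← Matrix.mul_assoc, ← Matrix.replicateCol_mulVec,
    Matrix.det_one_add_replicateCol_mul_replicateRow]

lemma psd_vecMulVec {d : ℕ} (u : Fin d → ℝ) : (vecMulVec u u).PosSemidef := by
  have h := Matrix.posSemidef_conjTranspose_mul_self (Matrix.replicateRow (Fin 1) u)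
  have heq : (Matrix.replicateRow (Fin 1) u)ᴴ * Matrix.replicateRow (Fin 1) u = vecMulVec u u := by
    rw [vecMulVec_eq (Fin 1)]
    ext i j
    simp [Matrix.mul_apply, Matrix.conjTranspose_apply]
  rwa [heq] at h

lemma pd_smul_one {d : ℕ} {lam : ℝ} (hlam : 0 < lam) :
    (lam • (1 : Matrix (Fin d) (Fin d) ℝ)).PosDef := by
  rw [Matrix.smul_one_eq_diagonal]
  exact Matrix.posDef_diagonal_iff.2 fun _ => hlam

lemma x_nonneg {d : ℕ} {V : Matrix (Fin d) (Fin d) ℝ} (hV : V.PosDef) (u : Fin d → ℝ) :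
    0 ≤ u ⬝ᵥ (V⁻¹ *ᵥ u) := by
  have h := (hV.posSemidef.inv).dotProduct_mulVec_nonneg u
  simpa using h

theorem stmt_12 (d : ℕ) (hd : 1 ≤ d) (lam : ℝ) (hlam : 0 < lam)
    (T : ℕ) (hT : 1 ≤ T) (a : ℕ → Fin d → ℝ)
    (V : ℕ → Matrix (Fin d) (Fin d) ℝ)
    (hV1 : V 1 = lam • (1 : Matrix (Fin d) (Fin d) ℝ))
    (hVrec : ∀ t ∈ Finset.Icc 1 T, V (t + 1) = V t + vecMulVec (a t) (a t)) :
    ∑ t ∈ Finset.Icc 1 T, min 1 (Real.sqrt (a t ⬝ᵥ ((V t)⁻¹ *ᵥ a t)))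
      ≤ Real.sqrt (2 * T * Real.log ((V (T + 1)).det / lam ^ d)) := by
  set x : ℕ → ℝ := fun t => a t ⬝ᵥ ((V t)⁻¹ *ᵥ a t) with hxdef
  -- positive definiteness
  have hPD : ∀ n, n ≤ T → (V (n + 1)).PosDef := by
    intro n
    induction n with
    | zero => intro _; rw [hV1]; exact pd_smul_one hlam
    | succ n ih =>
      intro h
      rw [hVrec (n + 1) (mem_Icc.2 ⟨by omega, h⟩)]
      exact (ih (by omega)).add_posSemidef (psd_vecMulVec _)
  have hPDt : ∀ t ∈ Finset.Icc 1 T, (V t).PosDef := by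
    intro t ht
    rw [mem_Icc] at ht
    have := hPD (t - 1) (by omega)
    rwa [Nat.sub_add_cancel ht.1] at this
  have hx : ∀ t ∈ Finset.Icc 1 T, 0 ≤ x t := fun t ht => x_nonneg (hPDt t ht) _
  -- determinant recursion
  have hdet : ∀ t ∈ Finset.Icc 1 T, (V (t + 1)).det = (V t).det * (1 + x t) := by
    intro t ht
    rw [hVrec t ht]
    exact det_step _ (hPDt t ht) _
  -- telescoping log sum
  have hsum : ∀ n, n ≤ T →
      ∑ t ∈ Finset.Icc 1 n, Real.log (1 + x t)
        = Real.log ((V (n + 1)).det) - Real.log ((V 1).det) := by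
    intro n
    induction n with
    | zero => intro _; simp
    | succ n ih =>
      intro h
      have hmem : n + 1 ∈ Finset.Icc 1 T := mem_Icc.2 ⟨by omega, h⟩
      rw [Finset.sum_Icc_succ_top (by omega), ih (by omega), hdet _ hmem,
        Real.log_mul (hPD n (by omega)).det_pos.ne' (by nlinarith [hx _ hmem])]
      ring
  have hdetT : Real.log ((V (T + 1)).det / lam ^ d)
      = ∑ t ∈ Finset.Icc 1 T, Real.log (1 + x t) := by
    rw [hsum T le_rfl, hV1, Matrix.det_smul, Matrix.det_one, mul_one,
      Fintype.card_fin, Real.log_div (hPD T le_rfl).det_pos.ne' (by positivity)]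
  -- sum of mins bound
  have key : ∑ t ∈ Finset.Icc 1 T, min 1 (x t)
      ≤ 2 * Real.log ((V (T + 1)).det / lam ^ d) := by
    rw [hdetT, Finset.mul_sum]
    exact Finset.sum_le_sum fun t ht => min_le_two_log (hx t ht)
  -- Cauchy–Schwarz
  set S := ∑ t ∈ Finset.Icc 1 T, min 1 (Real.sqrt (x t)) with hSdef
  have hSnn : 0 ≤ S :=
    Finset.sum_nonneg fun t ht => le_min zero_le_one (Real.sqrt_nonneg _)
  have hCS : S ^ 2 ≤ (T : ℝ) * ∑ t ∈ Finset.Icc 1 T, min 1 (x t) := by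
    have h := sq_sum_le_card_mul_sum_sq
      (s := Finset.Icc 1 T) (f := fun t => min 1 (Real.sqrt (x t)))
    have hcard : (Finset.Icc 1 T).card = T := by rw [Nat.card_Icc]; omega
    calc S ^ 2 ≤ ((Finset.Icc 1 T).card : ℝ)
          * ∑ t ∈ Finset.Icc 1 T, (min 1 (Real.sqrt (x t))) ^ 2 := by
          exact_mod_cast h
      _ = (T : ℝ) * ∑ t ∈ Finset.Icc 1 T, min 1 (x t) := by
          rw [hcard]
          congr 1
          exact Finset.sum_congr rfl fun t ht => sq_min_one_sqrt (hx t ht)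
  have hfin : S ^ 2 ≤ 2 * T * Real.log ((V (T + 1)).det / lam ^ d) := by
    calc S ^ 2 ≤ (T : ℝ) * ∑ t ∈ Finset.Icc 1 T, min 1 (x t) := hCS
      _ ≤ (T : ℝ) * (2 * Real.log ((V (T + 1)).det / lam ^ d)) := by
          apply mul_le_mul_of_nonneg_left key (by positivity)
      _ = 2 * T * Real.log ((V (T + 1)).det / lam ^ d) := by ring
  calc S = Real.sqrt (S ^ 2) := (Real.sqrt_sq hSnn).symm
    _ ≤ Real.sqrt (2 * T * Real.log ((V (T + 1)).det / lam ^ d)) :=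
      Real.sqrt_le_sqrt hfin
end

section
/- Let a < b be real numbers and α > 0. If u is drawn uniformly from [0, α), then the Lebesgue measure of the set of shifts u ∈ [0, α) for which some grid boundary u + kα (k ∈ ℤ) lies in the interval (a, b] is equal to min{b − a, α}; in particular, the probability of this event is at most (b − a)/α. -/
open MeasureTheory

lemma vol_helper_stmt18 (x y z w : ℝ) :
    volume (Set.Ioc x y ∩ Set.Ico z w) = ENNReal.ofReal (min y w - max x z) := by
  apply le_antisymm
  · have hsub : Set.Ioc x y ∩ Set.Ico z w ⊆ Set.Icc (max x z) (min y w) := by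
      rintro u ⟨⟨h1, h2⟩, ⟨h3, h4⟩⟩
      exact ⟨max_le h1.le h3, le_min h2 h4.le⟩
    calc volume (Set.Ioc x y ∩ Set.Ico z w) ≤ volume (Set.Icc (max x z) (min y w)) :=
          measure_mono hsub
      _ = ENNReal.ofReal (min y w - max x z) := Real.volume_Icc
  · have hsub : Set.Ioo (max x z) (min y w) ⊆ Set.Ioc x y ∩ Set.Ico z w := by
      rintro u ⟨h1, h2⟩
      refine ⟨⟨lt_of_le_of_lt (le_max_left x z) h1, (lt_of_lt_of_le h2 (min_le_left y w)).le⟩,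
        ⟨(lt_of_le_of_lt (le_max_right x z) h1).le, lt_of_lt_of_le h2 (min_le_right y w)⟩⟩
    calc ENNReal.ofReal (min y w - max x z) = volume (Set.Ioo (max x z) (min y w)) :=
          Real.volume_Ioo.symm
      _ ≤ volume (Set.Ioc x y ∩ Set.Ico z w) := measure_mono hsub

theorem stmt_18 (a b α : ℝ) (hab : a < b) (hα : 0 < α) :
    volume {u ∈ Set.Ico (0 : ℝ) α | ∃ k : ℤ, u + k * α ∈ Set.Ioc a b}
        = ENNReal.ofReal (min (b - a) α) ∧
      volume {u ∈ Set.Ico (0 : ℝ) α | ∃ k : ℤ, u + k * α ∈ Set.Ioc a b}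
          / ENNReal.ofReal α
        ≤ ENNReal.ofReal ((b - a) / α) := by
  have hvol : volume {u ∈ Set.Ico (0 : ℝ) α | ∃ k : ℤ, u + k * α ∈ Set.Ioc a b}
      = ENNReal.ofReal (min (b - a) α) := by
    rcases le_or_gt α (b - a) with h | h
    · -- the set is all of [0, α)
      have hSeq : {u ∈ Set.Ico (0 : ℝ) α | ∃ k : ℤ, u + k * α ∈ Set.Ioc a b}
          = Set.Ico (0 : ℝ) α := by
        apply Set.Subset.antisymm
        · intro u hu; exact hu.1
        · intro u hu
          refine ⟨hu, ⌊(b - u) / α⌋, ?_, ?_⟩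
          · have h1 : (b - u) / α - 1 < (⌊(b - u) / α⌋ : ℝ) := Int.sub_one_lt_floor _
            have h2 : ((b - u) / α) * α = b - u := div_mul_cancel₀ _ hα.ne'
            nlinarith [hu.1, hu.2]
          · have h1 : (⌊(b - u) / α⌋ : ℝ) ≤ (b - u) / α := Int.floor_le _
            have h2 : ((b - u) / α) * α = b - u := div_mul_cancel₀ _ hα.ne'
            nlinarith
      rw [hSeq, Real.volume_Ico, min_eq_right h]
      norm_num
    · -- b - a < α
      set n : ℤ := ⌊a / α⌋ with hn
      set c : ℝ := a - n * α with hc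
      have hfl : (n : ℝ) ≤ a / α := Int.floor_le _
      have hfu : a / α < (n : ℝ) + 1 := Int.lt_floor_add_one _
      have hda : (a / α) * α = a := div_mul_cancel₀ _ hα.ne'
      have hc0 : 0 ≤ c := by
        have := mul_le_mul_of_nonneg_right hfl hα.le
        rw [hda] at this; linarith [this]
      have hcα : c < α := by
        have := mul_lt_mul_of_pos_right hfu hα
        rw [hda] at this; nlinarith
      have hSeq : {u ∈ Set.Ico (0 : ℝ) α | ∃ k : ℤ, u + k * α ∈ Set.Ioc a b}
          = (Set.Ioc c (c + (b - a)) ∩ Set.Ico 0 α)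
            ∪ (Set.Ioc (c - α) (c + (b - a) - α) ∩ Set.Ico 0 α) := by
        ext u
        simp only [Set.mem_setOf_eq, Set.mem_union, Set.mem_inter_iff, Set.mem_Ioc,
          Set.mem_Ico]
        constructor
        · rintro ⟨⟨hu0, huα⟩, k, hk1, hk2⟩
          set m : ℤ := k - n with hm
          have hmc : (m : ℝ) = (k : ℝ) - (n : ℝ) := by push_cast [hm]; ring
          have hr1 : c < u + (m : ℝ) * α := by rw [hmc, hc]; linarith [hk1]
          have hr2 : u + (m : ℝ) * α ≤ c + (b - a) := by rw [hmc, hc]; linarith [hk2]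
          have hm0 : (0 : ℤ) ≤ m := by
            by_contra h'
            push_neg at h'
            have h'' : m ≤ -1 := by omega
            have : (m : ℝ) ≤ -1 := by exact_mod_cast h''
            nlinarith
          have hm1 : m ≤ 1 := by
            by_contra h'
            push_neg at h'
            have h'' : (2 : ℤ) ≤ m := by omega
            have : (2 : ℝ) ≤ (m : ℝ) := by exact_mod_cast h''
            nlinarith
          interval_cases m
          · left
            refine ⟨⟨?_, ?_⟩, hu0, huα⟩ <;> [skip; skip] <;>
              simp only [Int.cast_zero, zero_mul, add_zero] at hr1 hr2 <;> linarith
          · right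
            refine ⟨⟨?_, ?_⟩, hu0, huα⟩ <;>
              simp only [Int.cast_one, one_mul] at hr1 hr2 <;> linarith
        · rintro (⟨⟨h1, h2⟩, hi⟩ | ⟨⟨h1, h2⟩, hi⟩)
          · refine ⟨hi, n, ?_, ?_⟩ <;> push_cast <;> rw [hc] at h1 h2 <;> linarith
          · refine ⟨hi, n + 1, ?_, ?_⟩ <;> push_cast <;> rw [hc] at h1 h2 <;> linarith
        
      have hdisj : Disjoint (Set.Ioc c (c + (b - a)) ∩ Set.Ico (0:ℝ) α)
          (Set.Ioc (c - α) (c + (b - a) - α) ∩ Set.Ico 0 α) := by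
        rw [Set.disjoint_left]
        rintro u ⟨⟨hu1, _⟩, _⟩ ⟨⟨_, hv2⟩, _⟩
        linarith
      rw [hSeq, measure_union hdisj (measurableSet_Ioc.inter measurableSet_Ico),
        vol_helper_stmt18, vol_helper_stmt18]
      have hmax1 : max c (0:ℝ) = c := max_eq_left hc0
      have hmax2 : max (c - α) (0:ℝ) = 0 := max_eq_right (by linarith)
      have hmin2 : min (c + (b - a) - α) α = c + (b - a) - α := min_eq_left (by linarith)
      rw [hmax1, hmax2, hmin2]
      rcases le_total (c + (b - a)) α with hca | hca
      · have hmin1 : min (c + (b - a)) α = c + (b - a) := min_eq_left hca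
        have hz : ENNReal.ofReal (c + (b - a) - α - 0) = 0 :=
          ENNReal.ofReal_eq_zero.mpr (by linarith)
        rw [hmin1, hz, add_zero, min_eq_left h.le]
        congr 1; ring
      · have hmin1 : min (c + (b - a)) α = α := min_eq_right hca
        rw [hmin1, min_eq_left h.le, ← ENNReal.ofReal_add (by linarith) (by linarith)]
        congr 1; ring
  refine ⟨hvol, ?_⟩
  rw [hvol]
  calc ENNReal.ofReal (min (b - a) α) / ENNReal.ofReal α
      ≤ ENNReal.ofReal (b - a) / ENNReal.ofReal α :=
        ENNReal.div_le_div_right (ENNReal.ofReal_le_ofReal (min_le_left _ _)) _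
    _ = ENNReal.ofReal ((b - a) / α) := (ENNReal.ofReal_div_of_pos hα).symm
end
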